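/- arXiv:2104.15058 — 6 statements merged into one kernel-verified Lean document; each statement's English description precedes it below -/
import Mathlib

section
/- Every win-based WAM and every loss-based WAM has unbounded dry spells, i.e., for no function d : ℕ → ℕ does such a rule have a dry spell guarantee of d. -/
open scoped Classical
open Finset

/-! ## The perpetual voting framework

Voters are `Fin n`; alternatives are natural numbers (the order on `ℕ` plays no
special role: tie-breaking orders are explicit parameters `tb`). -/

/-- An approval profile: each voter approves a finite set of alternatives. -/
abbrev Profile (n : ℕ) := Fin n → Finset ℕ

/-- A decision sequence for `n` voters: in round `i` (0-indexed) the set of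
alternatives is `C i` and the approval profile is `A i`; every approval set is a
nonempty subset of the current alternatives. -/
structure DecisionSeq (n : ℕ) where
  C : ℕ → Finset ℕ
  A : ℕ → Profile n
  approvalSub : ∀ i v, A i v ⊆ C i
  approvalNonempty : ∀ i v, (A i v).Nonempty

/-- A perpetual voting rule: for every number of voters and every decision
sequence it resolutely chooses one winning alternative in each round; the winner
belongs to the current set of alternatives, and it only depends on the rounds up
to (and including) the current one (the past winners are then determined as
well, since the rule is applied round by round). -/
structure PerpetualRule where
  choice : ∀ n : ℕ, DecisionSeq n → ℕ → ℕ
  choice_mem : ∀ (n : ℕ) (D : DecisionSeq n) (k : ℕ), choice n D k ∈ D.C k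
  causal : ∀ (n : ℕ) (D D' : DecisionSeq n) (k : ℕ),
    (∀ i ≤ k, D.A i = D'.A i ∧ D.C i = D'.C i) → choice n D k = choice n D' k

/-- Satisfaction of voter `v` with the first `t` rounds of the choice sequence
produced by rule `R` on `D`. -/
noncomputable def satAt (R : PerpetualRule) {n : ℕ} (D : DecisionSeq n) (v : Fin n) (t : ℕ) : ℕ :=
  ((Finset.range t).filter fun i => R.choice n D i ∈ D.A i v).card

/-- Voter `v` has a dry spell of length `l`: in some window of `l` consecutive
rounds her satisfaction does not increase. -/
def HasDrySpell (R : PerpetualRule) {n : ℕ} (D : DecisionSeq n) (v : Fin n) (l : ℕ) : Prop :=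
  ∃ t : ℕ, satAt R D v t = satAt R D v (t + l)

/-- `R` has a dry spell guarantee of `d`: on no decision sequence does any voter
have a dry spell of length `d n`. -/
def DrySpellGuarantee (R : PerpetualRule) (d : ℕ → ℕ) : Prop :=
  ∀ (n : ℕ) (D : DecisionSeq n) (v : Fin n), ¬ HasDrySpell R D v (d n)

/-- Weighted approval score of alternative `c` for weights `β`. -/
noncomputable def approvalScore {n : ℕ} (β : Fin n → ℝ) (A : Profile n) (c : ℕ) : ℝ :=
  ∑ v : Fin n, if c ∈ A v then β v else 0

/-- `c` is the alternative selected from `Cs` by maximizing the weighted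
approval score w.r.t. weights `β`, ties broken by the fixed order `tb`. -/
def SelectedBy {n : ℕ} (β : Fin n → ℝ) (A : Profile n) (Cs : Finset ℕ)
    (tb : ℕ → ℕ → Prop) (c : ℕ) : Prop :=
  c ∈ Cs ∧ (∀ c' ∈ Cs, approvalScore β A c' ≤ approvalScore β A c) ∧
    (∀ c' ∈ Cs, approvalScore β A c' = approvalScore β A c → tb c c')

/-- `R` is a weighted approval method (WAM) with tie-breaking order `tb`:
there are voter weights, initialized to `1`, depending only on the history of
previous rounds, such that in each round `R` selects a weighted-approval-score
maximizing alternative (ties broken by `tb`). -/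
def IsWAM (R : PerpetualRule) (tb : ℕ → ℕ → Prop) : Prop :=
  ∃ α : ∀ n : ℕ, DecisionSeq n → ℕ → Fin n → ℝ,
    (∀ (n : ℕ) (D : DecisionSeq n) (v : Fin n), α n D 0 v = 1) ∧
    (∀ (n : ℕ) (D D' : DecisionSeq n) (k : ℕ),
        (∀ i < k, D.A i = D'.A i ∧ D.C i = D'.C i) → α n D k = α n D' k) ∧
    ∀ (n : ℕ) (D : DecisionSeq n) (k : ℕ),
      SelectedBy (α n D k) (D.A k) (D.C k) tb (R.choice n D k)

/-- The weights of a basic WAM with update functions `f` (for losing) and `g`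
(for winning), relative to the choices of rule `R`. -/
noncomputable def basicWeight (R : PerpetualRule) (f g : ℝ → ℝ) (n : ℕ) (D : DecisionSeq n) :
    ℕ → Fin n → ℝ
  | 0 => fun _ => 1
  | k + 1 => fun v =>
      if R.choice n D k ∈ D.A k v then g (basicWeight R f g n D k v)
      else f (basicWeight R f g n D k v)

/-- `R` is the basic WAM with update functions `f`, `g` and tie-breaking `tb`. -/
def IsBasicWAMWith (R : PerpetualRule) (f g : ℝ → ℝ) (tb : ℕ → ℕ → Prop) : Prop :=
  ∀ (n : ℕ) (D : DecisionSeq n) (k : ℕ),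
    SelectedBy (basicWeight R f g n D k) (D.A k) (D.C k) tb (R.choice n D k)

/-- A win-based WAM: a basic WAM with `f = id` (and `g x ≤ x`). -/
def IsWinBasedWAM (R : PerpetualRule) (g : ℝ → ℝ) (tb : ℕ → ℕ → Prop) : Prop :=
  (∀ x : ℝ, g x ≤ x) ∧ IsBasicWAMWith R id g tb

/-- A loss-based WAM: a basic WAM with `g = id` (and `f x ≥ x`). -/
def IsLossBasedWAM (R : PerpetualRule) (f : ℝ → ℝ) (tb : ℕ → ℕ → Prop) : Prop :=
  (∀ x : ℝ, x ≤ f x) ∧ IsBasicWAMWith R f id tb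

/-- Approval voting: the basic WAM with `f = g = id`. -/
def IsAV (R : PerpetualRule) (tb : ℕ → ℕ → Prop) : Prop :=
  IsBasicWAMWith R id id tb

/-- Perpetual Reset: the basic WAM with `f x = x + 1` and `g x = 1`. -/
def IsPerpetualReset (R : PerpetualRule) (tb : ℕ → ℕ → Prop) : Prop :=
  IsBasicWAMWith R (fun x => x + 1) (fun _ => 1) tb

/-- Perpetual PAV: the win-based WAM with `g x = x / (x + 1)`, i.e. the weight of
a voter satisfied `s` times is `1 / (s + 1)`. -/
def IsPerpetualPAV (R : PerpetualRule) (tb : ℕ → ℕ → Prop) : Prop :=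
  IsBasicWAMWith R id (fun x => x / (x + 1)) tb

/-- The voter weights of Perpetual Consensus (relative to the choices of `R`). -/
noncomputable def consensusWeight (R : PerpetualRule) (n : ℕ) (D : DecisionSeq n) :
    ℕ → Fin n → ℝ
  | 0 => fun _ => 1
  | k + 1 => fun v =>
      if R.choice n D k ∈ D.A k v ∧ 0 < consensusWeight R n D k v then
        consensusWeight R n D k v + 1 -
          (n : ℝ) / ((Finset.univ.filter fun u : Fin n =>
              R.choice n D k ∈ D.A k u ∧ 0 < consensusWeight R n D k u).card : ℝ)
      else consensusWeight R n D k v + 1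

/-- `R` is Perpetual Consensus with tie-breaking order `tb`: in each round it
selects an alternative maximizing `∑_{v approving c} max 0 (α v)` for the
Perpetual Consensus weights `α`. -/
def IsPerpetualConsensus (R : PerpetualRule) (tb : ℕ → ℕ → Prop) : Prop :=
  ∀ (n : ℕ) (D : DecisionSeq n) (k : ℕ),
    SelectedBy (fun v => max 0 (consensusWeight R n D k v)) (D.A k) (D.C k) tb
      (R.choice n D k)

/-- Insert the decision instance `(A0, C0)` at position `i` (0-indexed) into `D`,
shifting all later rounds by one. -/
def DecisionSeq.insertAt {n : ℕ} (D : DecisionSeq n) (i : ℕ) (C0 : Finset ℕ)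
    (A0 : Profile n) (hsub : ∀ v, A0 v ⊆ C0) (hne : ∀ v, (A0 v).Nonempty) :
    DecisionSeq n where
  C := fun j => if j < i then D.C j else if j = i then C0 else D.C (j - 1)
  A := fun j v => if j < i then D.A j v else if j = i then A0 v else D.A (j - 1) v
  approvalSub := by
    intro j v
    try dsimp only
    split_ifs with h1 h2
    · exact D.approvalSub j v
    · exact hsub v
    · exact D.approvalSub (j - 1) v
  approvalNonempty := by
    intro j v
    try dsimp only
    split_ifs with h1 h2
    · exact D.approvalNonempty j v
    · exact hne v
    · exact D.approvalNonempty (j - 1) v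

/-- The profile `A0` is uncontroversial due to `c`: the intersection of all
approval sets is exactly `{c}`. -/
def Uncontroversial {n : ℕ} (A0 : Profile n) (c : ℕ) : Prop :=
  (∀ v, c ∈ A0 v) ∧ ∀ c', (∀ v, c' ∈ A0 v) → c' = c

/-- Independence of uncontroversial decisions: inserting an uncontroversial
decision instance at any position yields `c` in the inserted round and leaves
all other choices unchanged. -/
def SatisfiesIUD (R : PerpetualRule) : Prop :=
  ∀ (n : ℕ) (D : DecisionSeq n) (i : ℕ) (C0 : Finset ℕ) (A0 : Profile n)
    (hsub : ∀ v, A0 v ⊆ C0) (hne : ∀ v, (A0 v).Nonempty) (c : ℕ),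
    Uncontroversial A0 c →
      (∀ j < i, R.choice n (D.insertAt i C0 A0 hsub hne) j = R.choice n D j) ∧
      R.choice n (D.insertAt i C0 A0 hsub hne) i = c ∧
      ∀ j, i ≤ j → R.choice n (D.insertAt i C0 A0 hsub hne) (j + 1) = R.choice n D j

/-- A simple decision sequence: the same profile and alternatives in every
round, and every voter approves exactly one alternative. -/
def DecisionSeq.IsSimple {n : ℕ} (D : DecisionSeq n) : Prop :=
  (∀ i, D.A i = D.A 0) ∧ (∀ i, D.C i = D.C 0) ∧ ∀ v, (D.A 0 v).card = 1

/-- `#v`: the number of voters with the same approval set as `v` (in a simple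
decision sequence). -/
noncomputable def groupSize {n : ℕ} (D : DecisionSeq n) (v : Fin n) : ℕ :=
  (Finset.univ.filter fun u : Fin n => D.A 0 u = D.A 0 v).card

/-- Simple proportionality: on every simple decision sequence with `n` voters,
after `n` rounds every voter's satisfaction equals `#v`. -/
def SatisfiesSimpleProportionality (R : PerpetualRule) : Prop :=
  ∀ (n : ℕ) (D : DecisionSeq n), D.IsSimple →
    ∀ v : Fin n, satAt R D v n = groupSize D v

/-- Apportionment lower quota: on simple decision sequences, after `k` rounds
every voter has satisfaction at least `⌊k · #v / n⌋`. -/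
def SatisfiesALQ (R : PerpetualRule) : Prop :=
  ∀ (n : ℕ) (D : DecisionSeq n), D.IsSimple → ∀ (k : ℕ) (v : Fin n),
    ⌊((k : ℚ) * (groupSize D v : ℚ)) / (n : ℚ)⌋ ≤ (satAt R D v k : ℤ)

/-- Apportionment upper quota: on simple decision sequences, after `k` rounds
every voter has satisfaction at most `⌈k · #v / n⌉`. -/
def SatisfiesAUQ (R : PerpetualRule) : Prop :=
  ∀ (n : ℕ) (D : DecisionSeq n), D.IsSimple → ∀ (k : ℕ) (v : Fin n),
    (satAt R D v k : ℤ) ≤ ⌈((k : ℚ) * (groupSize D v : ℚ)) / (n : ℚ)⌉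

/-- The load each member of `N'` would carry if `N'` were selected. -/
noncomputable def newLoad {n : ℕ} (ld : Fin n → ℝ) (N' : Finset (Fin n)) : ℝ :=
  (1 + ∑ v ∈ N', ld v) / (N'.card : ℝ)

/-- `R` is Perpetual Phragmén with tie-breaking order `tb` on alternatives:
there are loads (initially `0`) and, in each round, a selected nonempty voter
set of minimal prospective load among all sets jointly approving some
alternative; the winner is jointly approved by the selected set (ties among its
jointly approved alternatives broken by `tb`) and loads are updated accordingly. -/
def IsPerpetualPhragmen (R : PerpetualRule) (tb : ℕ → ℕ → Prop) : Prop :=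
  ∃ (load : ∀ n : ℕ, DecisionSeq n → ℕ → Fin n → ℝ)
    (S : ∀ n : ℕ, DecisionSeq n → ℕ → Finset (Fin n)),
    (∀ (n : ℕ) (D : DecisionSeq n) (v : Fin n), load n D 0 v = 0) ∧
    ∀ (n : ℕ) (D : DecisionSeq n) (k : ℕ),
      (S n D k).Nonempty ∧
      (∀ v ∈ S n D k, R.choice n D k ∈ D.A k v) ∧
      (∀ N' : Finset (Fin n), N'.Nonempty → (∃ c, ∀ v ∈ N', c ∈ D.A k v) →
        newLoad (load n D k) (S n D k) ≤ newLoad (load n D k) N') ∧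
      (∀ c, (∀ v ∈ S n D k, c ∈ D.A k v) → tb (R.choice n D k) c) ∧
      ∀ v : Fin n, load n D (k + 1) v =
        if v ∈ S n D k then newLoad (load n D k) (S n D k) else load n D k v

/-- Rotating Dictator w.r.t. the enumeration `e` of the voters: in round `k`
an alternative approved by the dictator `e n (k mod n)` is chosen (the
tb-best alternative approved by the dictator). -/
def IsRotatingDictator (R : PerpetualRule) (e : ∀ n : ℕ, Equiv.Perm (Fin n))
    (tb : ℕ → ℕ → Prop) : Prop :=
  ∀ (n : ℕ) (hn : 0 < n) (D : DecisionSeq n) (k : ℕ),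
    R.choice n D k ∈ D.A k (e n ⟨k % n, Nat.mod_lt k hn⟩) ∧
    ∀ c ∈ D.A k (e n ⟨k % n, Nat.mod_lt k hn⟩), tb (R.choice n D k) c

/-- `r(x)` for the Exponential Rule: `(m+1)/2` for the smallest natural number
`m` such that `2 ^ l * x = m` for some `l ≥ 0` (and `0` if no such `m` exists;
those values are never required). -/
noncomputable def expRound (x : ℝ) : ℕ :=
  if h : ∃ m : ℕ, ∃ l : ℕ, (2 : ℝ) ^ l * x = (m : ℝ) then (Nat.find h + 1) / 2 else 0

/-- The `f`-function of the Exponential Rule. -/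
noncomputable def expF (x : ℝ) : ℝ :=
  ((2 * (expRound x : ℝ) + 1) / (2 * (expRound x : ℝ) - 1)) * x

/-- The `g`-function of the Exponential Rule. -/
noncomputable def expG (x : ℝ) : ℝ :=
  ((2 * (expRound x : ℝ) + 1) /
      ((2 : ℝ) ^ (Nat.factorial (expRound x)) * (2 * (expRound x : ℝ) - 1))) * x

/-- The Exponential Rule: the basic WAM with update functions `expF`, `expG`. -/
def IsExponentialRule (R : PerpetualRule) (tb : ℕ → ℕ → Prop) : Prop :=
  IsBasicWAMWith R expF expG tb

/-- Round `j` is dictatorial: some voter `v` approves the winner, while all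
other voters disapprove the winner and jointly approve some other alternative `c`. -/
def DictatorialRound (R : PerpetualRule) {n : ℕ} (D : DecisionSeq n) (j : ℕ) : Prop :=
  ∃ c ∈ D.C j, c ≠ R.choice n D j ∧ ∃ v : Fin n, R.choice n D j ∈ D.A j v ∧
    ∀ v' : Fin n, v' ≠ v → R.choice n D j ∉ D.A j v' ∧ c ∈ D.A j v'

/-- The weights of Frege's apportionment method on the apportionment instance
induced by a simple decision sequence `D` (party of alternative `c` has vote
share `|N(c)|/n`), with seats assigned according to the choices of rule `R`. -/
noncomputable def fregeWeight (R : PerpetualRule) (n : ℕ) (D : DecisionSeq n) :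
    ℕ → ℕ → ℝ
  | 0 => fun c => ((Finset.univ.filter fun v : Fin n => D.A 0 v = {c}).card : ℝ) / (n : ℝ)
  | t + 1 => fun c =>
      fregeWeight R n D t c +
        ((Finset.univ.filter fun v : Fin n => D.A 0 v = {c}).card : ℝ) / (n : ℝ) -
        if R.choice n D t = c then 1 else 0

namespace UDS

/-! ### Orbits of the update functions -/

noncomputable def orb (h : ℝ → ℝ) : ℕ → ℝ
  | 0 => 1
  | k + 1 => h (orb h k)

lemma orb_succ (h : ℝ → ℝ) (k : ℕ) : orb h (k + 1) = h (orb h k) := rfl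

lemma orb_zero (h : ℝ → ℝ) : orb h 0 = 1 := rfl

lemma orb_anti {g : ℝ → ℝ} (hg : ∀ x, g x ≤ x) : ∀ {k m : ℕ}, k ≤ m → orb g m ≤ orb g k := by
  intro k m h
  induction m with
  | zero =>
    have : k = 0 := by omega
    simp [this]
  | succ m ih =>
    rcases Nat.lt_or_ge k (m + 1) with h' | h'
    · exact le_trans (hg (orb g m)) (ih (by omega))
    · have : k = m + 1 := by omega
      simp [this]

lemma orb_mono {f : ℝ → ℝ} (hf : ∀ x, x ≤ f x) : ∀ {k m : ℕ}, k ≤ m → orb f k ≤ orb f m := by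
  intro k m h
  induction m with
  | zero =>
    have : k = 0 := by omega
    simp [this]
  | succ m ih =>
    rcases Nat.lt_or_ge k (m + 1) with h' | h'
    · exact le_trans (ih (by omega)) (hf (orb f m))
    · have : k = m + 1 := by omega
      simp [this]

lemma orb_one_le {f : ℝ → ℝ} (hf : ∀ x, x ≤ f x) (k : ℕ) : 1 ≤ orb f k :=
  orb_mono hf (Nat.zero_le k)

/-! ### Generic lemmas -/

lemma selected_eq_of_strict {n : ℕ} {β : Fin n → ℝ} {A : Profile n} {Cs : Finset ℕ}
    {tb : ℕ → ℕ → Prop} {c : ℕ} (h : SelectedBy β A Cs tb c) (w : ℕ) (hw : w ∈ Cs)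
    (hs : ∀ c' ∈ Cs, c' ≠ w → approvalScore β A c' < approvalScore β A w) : c = w := by
  by_contra hne
  exact absurd (h.2.1 w hw) (not_le.mpr (hs c h.1 hne))

lemma hasDrySpell_of_window (R : PerpetualRule) {n : ℕ} (D : DecisionSeq n) (v : Fin n)
    (t l : ℕ) (h : ∀ i, t ≤ i → i < t + l → R.choice n D i ∉ D.A i v) :
    HasDrySpell R D v l := by
  refine ⟨t, ?_⟩
  have hset : (Finset.range (t + l)).filter (fun i => R.choice n D i ∈ D.A i v) =
      (Finset.range t).filter (fun i => R.choice n D i ∈ D.A i v) := by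
    ext x
    simp only [Finset.mem_filter, Finset.mem_range]
    constructor
    · rintro ⟨hx, hp⟩
      refine ⟨?_, hp⟩
      by_contra hx'
      exact h x (by omega) (by omega) hp
    · rintro ⟨hx, hp⟩
      exact ⟨by omega, hp⟩
  simp only [satAt, hset]

lemma master (R : PerpetualRule) (f g : ℝ → ℝ) (tb : ℕ → ℕ → Prop)
    (hb : IsBasicWAMWith R f g tb) {n : ℕ} (D : DecisionSeq n) (W : ℕ → ℕ) (E : ℕ → Fin n → ℝ)
    (hE0 : ∀ v, E 0 v = 1)
    (hstep : ∀ i v, E (i + 1) v = if W i ∈ D.A i v then g (E i v) else f (E i v))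
    (hwin : ∀ i c, SelectedBy (E i) (D.A i) (D.C i) tb c → c = W i) :
    ∀ i, basicWeight R f g n D i = E i ∧ R.choice n D i = W i := by
  intro i
  induction i with
  | zero =>
    have hw : basicWeight R f g n D 0 = E 0 := by
      funext v
      simp [basicWeight, hE0 v]
    have hs := hb n D 0
    rw [hw] at hs
    exact ⟨hw, hwin 0 _ hs⟩
  | succ i ih =>
    have hw : basicWeight R f g n D (i + 1) = E (i + 1) := by
      funext v
      have hrec : basicWeight R f g n D (i + 1) v =
          if R.choice n D i ∈ D.A i v then g (basicWeight R f g n D i v)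
          else f (basicWeight R f g n D i v) := rfl
      rw [hrec, ih.1, ih.2, hstep i v]
    have hs := hb n D (i + 1)
    rw [hw] at hs
    exact ⟨hw, hwin (i + 1) _ hs⟩

end UDS

namespace UDS

/-! ### The loss-based construction: 3 voters.
Rounds `i < 2L` (pre-phase): voter 0 approves `{0}` (always satisfied, weight 1);
voters 1 and 2 alternately approve the losing alternative `{1}` and grow.
Rounds `2L ≤ i < 3L` (spell): voter 0 approves `{1}` and is dry, voters 1,2 with total
weight `2·x L` keep alternative 0 winning. The winner is 0 in every round. -/

def Alb (L : ℕ) : ℕ → Profile 3 := fun i =>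
  if i < 2 * L then
    (if i % 2 = 0 then ![{0}, {1}, {0}] else ![{0}, {0}, {1}])
  else if i < 3 * L then ![{1}, {0}, {0}] else ![{0}, {0}, {0}]

def Dlb (L : ℕ) : DecisionSeq 3 where
  C := fun i => if i < 3 * L then {0, 1} else {0}
  A := Alb L
  approvalSub := by
    intro i v
    show Alb L i v ⊆ (if i < 3 * L then ({0, 1} : Finset ℕ) else {0})
    rcases Nat.lt_or_ge i (3 * L) with h | h
    · rw [if_pos h]
      unfold Alb
      split_ifs <;> fin_cases v <;> decide
    · rw [if_neg (Nat.not_lt.mpr h)]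
      unfold Alb
      rw [if_neg (by omega), if_neg (by omega)]
      fin_cases v <;> decide
  approvalNonempty := by
    intro i v
    show (Alb L i v).Nonempty
    unfold Alb
    split_ifs <;> fin_cases v <;> exact Finset.singleton_nonempty _

noncomputable def Elb (f : ℝ → ℝ) (L : ℕ) : ℕ → Fin 3 → ℝ := fun i =>
  ![orb f (min (i - 2 * L) L), orb f (min ((i + 1) / 2) L), orb f (min (i / 2) L)]

lemma Elb_step (f : ℝ → ℝ) (L : ℕ) : ∀ i v, Elb f L (i + 1) v =
    if (0 : ℕ) ∈ (Dlb L).A i v then id (Elb f L i v) else f (Elb f L i v) := by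
  intro i v
  show Elb f L (i + 1) v = if (0 : ℕ) ∈ Alb L i v then id (Elb f L i v) else f (Elb f L i v)
  have hsucc : ∀ a b : ℕ, a = b + 1 → orb f a = f (orb f b) := fun a b e => by rw [e, orb_succ]
  have heq : ∀ a b : ℕ, a = b → orb f a = orb f b := fun a b e => by rw [e]
  rcases Nat.lt_or_ge i (2 * L) with h1 | h1
  · rcases Nat.mod_two_eq_zero_or_one i with hp | hp <;>
      fin_cases v <;>
        simp +decide [Alb, Elb, h1, hp] <;>
          first
            | exact heq _ _ (by omega)
            | exact hsucc _ _ (by omega)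
  · have h1' : ¬ i < 2 * L := by omega
    rcases Nat.lt_or_ge i (3 * L) with h2 | h2
    · fin_cases v <;>
        simp +decide [Alb, Elb, h1', h2] <;>
          first
            | exact heq _ _ (by omega)
            | exact hsucc _ _ (by omega)
    · have h2' : ¬ i < 3 * L := by omega
      fin_cases v <;>
        simp +decide [Alb, Elb, h1', h2'] <;>
          first
            | exact heq _ _ (by omega)
            | exact hsucc _ _ (by omega)

lemma Elb_win (f : ℝ → ℝ) (hf : ∀ x, x ≤ f x) (tb : ℕ → ℕ → Prop) (L : ℕ) :
    ∀ i c, SelectedBy (Elb f L i) ((Dlb L).A i) ((Dlb L).C i) tb c → c = 0 := by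
  intro i c hc
  rcases Nat.lt_or_ge i (3 * L) with h3 | h3
  · apply selected_eq_of_strict hc 0
    · show (0 : ℕ) ∈ (if i < 3 * L then ({0, 1} : Finset ℕ) else {0})
      simp [h3]
    · intro c' hc' hne
      have hc1 : c' = 1 := by
        revert hc'
        show c' ∈ (if i < 3 * L then ({0, 1} : Finset ℕ) else {0}) → c' = 1
        simp only [if_pos h3, Finset.mem_insert, Finset.mem_singleton]
        rintro (h | h) <;> omega
      subst hc1
      show approvalScore (Elb f L i) (Alb L i) 1 < approvalScore (Elb f L i) (Alb L i) 0
      rcases Nat.lt_or_ge i (2 * L) with h1 | h1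
      · rcases Nat.mod_two_eq_zero_or_one i with hp | hp
        · -- pre-phase, even round: score 1 = x(i/2) < 1 + x(i/2) = score 0
          simp +decide [approvalScore, Fin.sum_univ_three, Alb, Elb, h1, hp]
          have e0 : min (i - 2 * L) L = 0 := by omega
          have e1 : min ((i + 1) / 2) L = min (i / 2) L := by omega
          rw [e0, e1, orb_zero]
          linarith
        · -- pre-phase, odd round
          simp +decide [approvalScore, Fin.sum_univ_three, Alb, Elb, h1, hp]
          have e0 : min (i - 2 * L) L = 0 := by omega
          rw [e0, orb_zero]
          have := orb_mono hf (show min (i / 2) L ≤ min ((i + 1) / 2) L by omega)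
          linarith
      · -- spell phase
        have h1' : ¬ i < 2 * L := by omega
        simp +decide [approvalScore, Fin.sum_univ_three, Alb, Elb, h1', h3]
        have e1 : min ((i + 1) / 2) L = L := by omega
        have e2 : min (i / 2) L = L := by omega
        rw [e1, e2]
        have h4 := orb_mono hf (show min (i - 2 * L) L ≤ L from min_le_right _ _)
        have h5 := orb_one_le hf L
        linarith
  · have := hc.1
    revert this
    show c ∈ (if i < 3 * L then ({0, 1} : Finset ℕ) else {0}) → c = 0
    simp [Nat.not_lt.mpr h3]

lemma lb_spell (R : PerpetualRule) (f : ℝ → ℝ) (tb : ℕ → ℕ → Prop) (hf : ∀ x, x ≤ f x)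
    (hb : IsBasicWAMWith R f id tb) (L : ℕ) :
    HasDrySpell R (Dlb L) 0 L := by
  have hm := master R f id tb hb (Dlb L) (fun _ => 0) (Elb f L)
    (by intro v; fin_cases v <;> simp [Elb, orb_zero])
    (Elb_step f L) (Elb_win f hf tb L)
  apply hasDrySpell_of_window R (Dlb L) 0 (2 * L) L
  intro i hi1 hi2
  rw [(hm i).2]
  show (0 : ℕ) ∉ Alb L i 0
  unfold Alb
  have h1 : ¬ i < 2 * L := by omega
  have h2 : i < 3 * L := by omega
  simp [h1, h2]

end UDS

namespace UDS

/-! ### Win-based construction, positive orbit (3 voters).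
Pre-phase `i < 2L`: voter 0 approves `{0}` (winner, burns every round);
voters 1,2 alternately approve `{0}` (burn) / `{1}` (frozen).
Spell `2L ≤ i < 3L`: voter 0 approves `{1}` (dry, frozen at `x (2L)`),
voters 1,2 approve `{0}` with total weight `2 x (i-L) > x (2L)`. Winner always 0. -/

def Aw2 (L : ℕ) : ℕ → Profile 3 := fun i =>
  if i < 2 * L then
    (if i % 2 = 0 then ![{0}, {0}, {1}] else ![{0}, {1}, {0}])
  else if i < 3 * L then ![{1}, {0}, {0}] else ![{0}, {0}, {0}]

def Dw2 (L : ℕ) : DecisionSeq 3 where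
  C := fun i => if i < 3 * L then {0, 1} else {0}
  A := Aw2 L
  approvalSub := by
    intro i v
    show Aw2 L i v ⊆ (if i < 3 * L then ({0, 1} : Finset ℕ) else {0})
    rcases Nat.lt_or_ge i (3 * L) with h | h
    · rw [if_pos h]
      unfold Aw2
      split_ifs <;> fin_cases v <;> decide
    · rw [if_neg (Nat.not_lt.mpr h)]
      unfold Aw2
      rw [if_neg (by omega), if_neg (by omega)]
      fin_cases v <;> decide
  approvalNonempty := by
    intro i v
    show (Aw2 L i v).Nonempty
    unfold Aw2
    split_ifs <;> fin_cases v <;> exact Finset.singleton_nonempty _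

noncomputable def Ew2 (g : ℝ → ℝ) (L : ℕ) : ℕ → Fin 3 → ℝ := fun i =>
  ![orb g (min i (2 * L) + (i - 3 * L)),
    orb g (min ((i + 1) / 2) L + (i - 2 * L)),
    orb g (min (i / 2) L + (i - 2 * L))]

lemma Ew2_step (g : ℝ → ℝ) (L : ℕ) : ∀ i v, Ew2 g L (i + 1) v =
    if (0 : ℕ) ∈ (Dw2 L).A i v then g (Ew2 g L i v) else id (Ew2 g L i v) := by
  intro i v
  show Ew2 g L (i + 1) v = if (0 : ℕ) ∈ Aw2 L i v then g (Ew2 g L i v) else id (Ew2 g L i v)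
  have hsucc : ∀ a b : ℕ, a = b + 1 → orb g a = g (orb g b) := fun a b e => by rw [e, orb_succ]
  have heq : ∀ a b : ℕ, a = b → orb g a = orb g b := fun a b e => by rw [e]
  rcases Nat.lt_or_ge i (2 * L) with h1 | h1
  · rcases Nat.mod_two_eq_zero_or_one i with hp | hp <;>
      fin_cases v <;>
        simp +decide [Aw2, Ew2, h1, hp] <;>
          first
            | exact heq _ _ (by omega)
            | exact hsucc _ _ (by omega)
  · have h1' : ¬ i < 2 * L := by omega
    rcases Nat.lt_or_ge i (3 * L) with h2 | h2
    · fin_cases v <;>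
        simp +decide [Aw2, Ew2, h1', h2] <;>
          first
            | exact heq _ _ (by omega)
            | exact hsucc _ _ (by omega)
    · have h2' : ¬ i < 3 * L := by omega
      fin_cases v <;>
        simp +decide [Aw2, Ew2, h1', h2'] <;>
          first
            | exact heq _ _ (by omega)
            | exact hsucc _ _ (by omega)

lemma Ew2_win (g : ℝ → ℝ) (hg : ∀ x, g x ≤ x) (hpos : ∀ k, 0 < orb g k)
    (tb : ℕ → ℕ → Prop) (L : ℕ) :
    ∀ i c, SelectedBy (Ew2 g L i) ((Dw2 L).A i) ((Dw2 L).C i) tb c → c = 0 := by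
  intro i c hc
  rcases Nat.lt_or_ge i (3 * L) with h3 | h3
  · apply selected_eq_of_strict hc 0
    · show (0 : ℕ) ∈ (if i < 3 * L then ({0, 1} : Finset ℕ) else {0})
      simp [h3]
    · intro c' hc' hne
      have hc1 : c' = 1 := by
        revert hc'
        show c' ∈ (if i < 3 * L then ({0, 1} : Finset ℕ) else {0}) → c' = 1
        simp only [if_pos h3, Finset.mem_insert, Finset.mem_singleton]
        rintro (h | h) <;> omega
      subst hc1
      show approvalScore (Ew2 g L i) (Aw2 L i) 1 < approvalScore (Ew2 g L i) (Aw2 L i) 0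
      rcases Nat.lt_or_ge i (2 * L) with h1 | h1
      · rcases Nat.mod_two_eq_zero_or_one i with hp | hp
        · -- even pre-phase round: score 1 = x((i+1)/2) ; score 0 = x i + x(i/2)
          simp +decide [approvalScore, Fin.sum_univ_three, Aw2, Ew2, h1, hp]
          have e0 : min i (2 * L) + (i - 3 * L) = i := by omega
          have e1 : min ((i + 1) / 2) L + (i - 2 * L) = min (i / 2) L + (i - 2 * L) := by omega
          rw [e0, e1]
          have := hpos i
          linarith
        · -- odd pre-phase round
          simp +decide [approvalScore, Fin.sum_univ_three, Aw2, Ew2, h1, hp]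
          have e0 : min i (2 * L) + (i - 3 * L) = i := by omega
          rw [e0]
          have hmono := orb_anti hg
            (show min (i / 2) L + (i - 2 * L) ≤ min ((i + 1) / 2) L + (i - 2 * L) by omega)
          have := hpos i
          linarith
      · -- spell phase: score 1 = x(2L) ; score 0 = 2 x(i - L)
        have h1' : ¬ i < 2 * L := by omega
        simp +decide [approvalScore, Fin.sum_univ_three, Aw2, Ew2, h1', h3]
        have e0 : min i (2 * L) + (i - 3 * L) = 2 * L := by omega
        have e1 : min ((i + 1) / 2) L + (i - 2 * L) = i - L := by omega
        have e2 : min (i / 2) L + (i - 2 * L) = i - L := by omega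
        rw [e0, e1, e2]
        have hmono := orb_anti hg (show i - L ≤ 2 * L by omega)
        have := hpos (i - L)
        linarith
  · have := hc.1
    revert this
    show c ∈ (if i < 3 * L then ({0, 1} : Finset ℕ) else {0}) → c = 0
    simp [Nat.not_lt.mpr h3]

lemma w2_spell (R : PerpetualRule) (g : ℝ → ℝ) (tb : ℕ → ℕ → Prop) (hg : ∀ x, g x ≤ x)
    (hpos : ∀ k, 0 < orb g k) (hb : IsBasicWAMWith R id g tb) (L : ℕ) :
    HasDrySpell R (Dw2 L) 0 L := by
  have hm := master R id g tb hb (Dw2 L) (fun _ => 0) (Ew2 g L)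
    (by intro v; fin_cases v <;> simp [Ew2, orb_zero])
    (Ew2_step g L) (Ew2_win g hg hpos tb L)
  apply hasDrySpell_of_window R (Dw2 L) 0 (2 * L) L
  intro i hi1 hi2
  rw [(hm i).2]
  show (0 : ℕ) ∉ Aw2 L i 0
  unfold Aw2
  have h1 : ¬ i < 2 * L := by omega
  have h2 : i < 3 * L := by omega
  simp [h1, h2]

/-! ### Win-based construction, orbit reaching a negative value `x A < 0` (3 voters).
Phase 0 `i < A`: single alternative `{0}`, everyone burns in lockstep.
Phase 1 `A ≤ i < A + 2p`: voters 0 and 1 alternately burn solo (the other two voters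
pool on alternative 1, whose score is pushed below by the negative weight of voter 2,
frozen at `x A < 0`). Phase 2 `A + 2p ≤ i < A + 3p` (spell): voter 2 burns solo from
`x A` down to `x (A + p)`, beating alternative 1 whose score is `2 x (A+p) < x (A+t)`.
Winner is always 0. -/

def Aw3 (A p : ℕ) : ℕ → Profile 3 := fun i =>
  if i < A then ![{0}, {0}, {0}]
  else if i < A + 2 * p then
    (if (i - A) % 2 = 0 then ![{1}, {0}, {1}] else ![{0}, {1}, {1}])
  else if i < A + 3 * p then ![{1}, {1}, {0}] else ![{0}, {0}, {0}]

def Dw3 (A p : ℕ) : DecisionSeq 3 where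
  C := fun i => if i < A then {0} else if i < A + 3 * p then {0, 1} else {0}
  A := Aw3 A p
  approvalSub := by
    intro i v
    show Aw3 A p i v ⊆ (if i < A then ({0} : Finset ℕ) else if i < A + 3 * p then {0, 1} else {0})
    rcases Nat.lt_or_ge i A with h | h
    · rw [if_pos h]
      unfold Aw3
      rw [if_pos h]
      fin_cases v <;> decide
    · rw [if_neg (Nat.not_lt.mpr h)]
      rcases Nat.lt_or_ge i (A + 3 * p) with h2 | h2
      · rw [if_pos h2]
        unfold Aw3
        split_ifs <;> fin_cases v <;> decide
      · rw [if_neg (Nat.not_lt.mpr h2)]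
        unfold Aw3
        rw [if_neg (by omega), if_neg (by omega), if_neg (by omega)]
        fin_cases v <;> decide
  approvalNonempty := by
    intro i v
    show (Aw3 A p i v).Nonempty
    unfold Aw3
    split_ifs <;> fin_cases v <;> exact Finset.singleton_nonempty _

noncomputable def Ew3 (g : ℝ → ℝ) (A p : ℕ) : ℕ → Fin 3 → ℝ := fun i =>
  ![orb g (min i A + min ((i - A) / 2) p + (i - (A + 3 * p))),
    orb g (min i A + min ((i - A + 1) / 2) p + (i - (A + 3 * p))),
    orb g (min i A + (i - (A + 2 * p)))]

lemma Ew3_step (g : ℝ → ℝ) (A p : ℕ) : ∀ i v, Ew3 g A p (i + 1) v =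
    if (0 : ℕ) ∈ (Dw3 A p).A i v then g (Ew3 g A p i v) else id (Ew3 g A p i v) := by
  intro i v
  show Ew3 g A p (i + 1) v =
    if (0 : ℕ) ∈ Aw3 A p i v then g (Ew3 g A p i v) else id (Ew3 g A p i v)
  have hsucc : ∀ a b : ℕ, a = b + 1 → orb g a = g (orb g b) := fun a b e => by rw [e, orb_succ]
  have heq : ∀ a b : ℕ, a = b → orb g a = orb g b := fun a b e => by rw [e]
  rcases Nat.lt_or_ge i A with h1 | h1
  · fin_cases v <;>
      simp +decide [Aw3, Ew3, h1] <;>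
        first
          | exact heq _ _ (by omega)
          | exact hsucc _ _ (by omega)
  · have h1' : ¬ i < A := by omega
    rcases Nat.lt_or_ge i (A + 2 * p) with h2 | h2
    · rcases Nat.mod_two_eq_zero_or_one (i - A) with hp | hp <;>
        fin_cases v <;>
          simp +decide [Aw3, Ew3, h1', h2, hp] <;>
            first
              | exact heq _ _ (by omega)
              | exact hsucc _ _ (by omega)
    · have h2' : ¬ i < A + 2 * p := by omega
      rcases Nat.lt_or_ge i (A + 3 * p) with h3 | h3
      · fin_cases v <;>
          simp +decide [Aw3, Ew3, h1', h2', h3] <;>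
            first
              | exact heq _ _ (by omega)
              | exact hsucc _ _ (by omega)
      · have h3' : ¬ i < A + 3 * p := by omega
        fin_cases v <;>
          simp +decide [Aw3, Ew3, h1', h2', h3'] <;>
            first
              | exact heq _ _ (by omega)
              | exact hsucc _ _ (by omega)

lemma Ew3_win (g : ℝ → ℝ) (hg : ∀ x, g x ≤ x) (A p : ℕ) (hA : orb g A < 0)
    (tb : ℕ → ℕ → Prop) :
    ∀ i c, SelectedBy (Ew3 g A p i) ((Dw3 A p).A i) ((Dw3 A p).C i) tb c → c = 0 := by
  intro i c hc
  rcases Nat.lt_or_ge i A with h1 | h1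
  · have := hc.1
    revert this
    show c ∈ (if i < A then ({0} : Finset ℕ) else if i < A + 3 * p then {0, 1} else {0}) → c = 0
    simp [h1]
  · have h1' : ¬ i < A := by omega
    rcases Nat.lt_or_ge i (A + 3 * p) with h3 | h3
    · apply selected_eq_of_strict hc 0
      · show (0 : ℕ) ∈
          (if i < A then ({0} : Finset ℕ) else if i < A + 3 * p then {0, 1} else {0})
        simp [h1', h3]
      · intro c' hc' hne
        have hc1 : c' = 1 := by
          revert hc'
          show c' ∈
            (if i < A then ({0} : Finset ℕ) else if i < A + 3 * p then {0, 1} else {0}) → c' = 1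
          simp only [if_neg h1', if_pos h3, Finset.mem_insert, Finset.mem_singleton]
          rintro (h | h) <;> omega
        subst hc1
        show approvalScore (Ew3 g A p i) (Aw3 A p i) 1 < approvalScore (Ew3 g A p i) (Aw3 A p i) 0
        rcases Nat.lt_or_ge i (A + 2 * p) with h2 | h2
        · rcases Nat.mod_two_eq_zero_or_one (i - A) with hp | hp
          · -- phase 1, even offset: voter 1 burns solo
            simp +decide [approvalScore, Fin.sum_univ_three, Aw3, Ew3, h1', h2, hp]
            have e0 : min i A + min ((i - A) / 2) p + (i - (A + 3 * p)) =
                min i A + min ((i - A + 1) / 2) p + (i - (A + 3 * p)) := by omega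
            have e2 : min i A + (i - (A + 2 * p)) = A := by omega
            rw [e0, e2]
            linarith
          · -- phase 1, odd offset: voter 0 burns solo
            simp +decide [approvalScore, Fin.sum_univ_three, Aw3, Ew3, h1', h2, hp]
            have e2 : min i A + (i - (A + 2 * p)) = A := by omega
            rw [e2]
            have hmono := orb_anti hg
              (show min i A + min ((i - A) / 2) p + (i - (A + 3 * p)) ≤
                min i A + min ((i - A + 1) / 2) p + (i - (A + 3 * p)) by omega)
            linarith
        · -- spell: voter 2 burns solo
          have h2' : ¬ i < A + 2 * p := by omega
          simp +decide [approvalScore, Fin.sum_univ_three, Aw3, Ew3, h1', h2', h3]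
          have e0 : min i A + min ((i - A) / 2) p + (i - (A + 3 * p)) = A + p := by omega
          have e1 : min i A + min ((i - A + 1) / 2) p + (i - (A + 3 * p)) = A + p := by omega
          rw [e0, e1]
          have hm1 := orb_anti hg (show min i A + (i - (A + 2 * p)) ≤ A + p by omega)
          have hm2 := orb_anti hg (show A ≤ A + p by omega)
          linarith
    · have := hc.1
      revert this
      show c ∈ (if i < A then ({0} : Finset ℕ) else if i < A + 3 * p then {0, 1} else {0}) → c = 0
      simp [h1', Nat.not_lt.mpr h3]

lemma w3_spell (R : PerpetualRule) (g : ℝ → ℝ) (tb : ℕ → ℕ → Prop) (hg : ∀ x, g x ≤ x)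
    (A : ℕ) (hA : orb g A < 0) (hb : IsBasicWAMWith R id g tb) (p : ℕ) :
    HasDrySpell R (Dw3 A p) 0 p := by
  have hm := master R id g tb hb (Dw3 A p) (fun _ => 0) (Ew3 g A p)
    (by intro v; fin_cases v <;> simp [Ew3, orb_zero])
    (Ew3_step g A p) (Ew3_win g hg A p hA tb)
  apply hasDrySpell_of_window R (Dw3 A p) 0 (A + 2 * p) p
  intro i hi1 hi2
  rw [(hm i).2]
  show (0 : ℕ) ∉ Aw3 A p i 0
  unfold Aw3
  have h1 : ¬ i < A := by omega
  have h2 : ¬ i < A + 2 * p := by omega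
  have h3 : i < A + 3 * p := by omega
  simp [h1, h2, h3]

/-! ### Win-based construction, orbit hitting exactly 0 (2 voters, uses tie-breaking).
Phase 0 `i < A`: single alternative `{2}`, lockstep burn to weight `x A = 0`.
After: voter 0 approves `{a}`, voter 1 approves `{b}` where `tb a b`; all scores
are 0 forever, so `a` wins every round and voter 1 is dry forever. -/

def Aw0 (A a b : ℕ) : ℕ → Profile 2 := fun i =>
  if i < A then ![{2}, {2}] else ![{a}, {b}]

def Dw0 (A a b : ℕ) (ha : a ∈ ({0, 1} : Finset ℕ)) (hb : b ∈ ({0, 1} : Finset ℕ)) :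
    DecisionSeq 2 where
  C := fun i => if i < A then {2} else {0, 1}
  A := Aw0 A a b
  approvalSub := by
    intro i v
    show Aw0 A a b i v ⊆ (if i < A then ({2} : Finset ℕ) else {0, 1})
    unfold Aw0
    split_ifs with h
    · fin_cases v <;> decide
    · fin_cases v <;> simp [Finset.singleton_subset_iff, ha, hb]
  approvalNonempty := by
    intro i v
    show (Aw0 A a b i v).Nonempty
    unfold Aw0
    split_ifs <;> fin_cases v <;> exact Finset.singleton_nonempty _

noncomputable def Ew0 (g : ℝ → ℝ) (A : ℕ) : ℕ → Fin 2 → ℝ := fun i =>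
  ![orb g i, orb g (min i A)]

lemma Ew0_step (g : ℝ → ℝ) (A a b : ℕ) (hne : a ≠ b)
    (ha : a ∈ ({0, 1} : Finset ℕ)) (hb : b ∈ ({0, 1} : Finset ℕ)) :
    ∀ i v, Ew0 g A (i + 1) v =
      if (if i < A then 2 else a) ∈ (Dw0 A a b ha hb).A i v then g (Ew0 g A i v)
      else id (Ew0 g A i v) := by
  intro i v
  show Ew0 g A (i + 1) v =
    if (if i < A then 2 else a) ∈ Aw0 A a b i v then g (Ew0 g A i v) else id (Ew0 g A i v)
  have hsucc : ∀ u w : ℕ, u = w + 1 → orb g u = g (orb g w) := fun u w e => by rw [e, orb_succ]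
  have heq : ∀ u w : ℕ, u = w → orb g u = orb g w := fun u w e => by rw [e]
  rcases Nat.lt_or_ge i A with h1 | h1
  · fin_cases v <;>
      simp +decide [Aw0, Ew0, h1] <;>
        first
          | exact heq _ _ (by omega)
          | exact hsucc _ _ (by omega)
  · have h1' : ¬ i < A := by omega
    fin_cases v
    · simp +decide [Aw0, Ew0, h1']
      exact hsucc _ _ (by omega)
    · simp [Aw0, Ew0, h1', Finset.mem_singleton, hne]
      exact heq _ _ (by omega)

lemma Ew0_win (g : ℝ → ℝ) (A a b : ℕ) (hne : a ≠ b)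
    (ha : a ∈ ({0, 1} : Finset ℕ)) (hb : b ∈ ({0, 1} : Finset ℕ))
    (hzero : ∀ k, A ≤ k → orb g k = 0)
    (tb : ℕ → ℕ → Prop) (htb : IsLinearOrder ℕ tb) (hab : tb a b) :
    ∀ i c, SelectedBy (Ew0 g A i) ((Dw0 A a b ha hb).A i) ((Dw0 A a b ha hb).C i) tb c →
      c = (if i < A then 2 else a) := by
  intro i c hc
  rcases Nat.lt_or_ge i A with h1 | h1
  · rw [if_pos h1]
    have hcm := hc.1
    revert hcm
    show c ∈ (if i < A then ({2} : Finset ℕ) else {0, 1}) → _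
    simp [h1]
  · have h1' : ¬ i < A := Nat.not_lt.mpr h1
    rw [if_neg h1']
    have e0 : orb g i = 0 := hzero i h1
    have e1 : orb g (min i A) = 0 := by
      rw [Nat.min_eq_right h1]
      exact hzero A le_rfl
    have hsc : ∀ c', approvalScore (Ew0 g A i) ((Dw0 A a b ha hb).A i) c' = 0 := by
      intro c'
      show approvalScore (Ew0 g A i) (Aw0 A a b i) c' = 0
      simp [approvalScore, Fin.sum_univ_two, Aw0, h1', Ew0, e0, e1]
    have haC : a ∈ (Dw0 A a b ha hb).C i := by
      show a ∈ (if i < A then ({2} : Finset ℕ) else {0, 1})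
      rw [if_neg h1']
      exact ha
    have hbC : b ∈ (Dw0 A a b ha hb).C i := by
      show b ∈ (if i < A then ({2} : Finset ℕ) else {0, 1})
      rw [if_neg h1']
      exact hb
    have hta : tb c a := hc.2.2 a haC (by rw [hsc, hsc])
    have hcC : c ∈ ({0, 1} : Finset ℕ) := by
      have hcm := hc.1
      revert hcm
      show c ∈ (if i < A then ({2} : Finset ℕ) else {0, 1}) → _
      rw [if_neg h1']
      exact id
    have hccases : c = a ∨ c = b := by
      simp only [Finset.mem_insert, Finset.mem_singleton] at hcC ha hb
      omega
    rcases hccases with rfl | rfl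
    · rfl
    · haveI := htb
      exact absurd (_root_.antisymm hab hta) hne

lemma w0_spell (R : PerpetualRule) (g : ℝ → ℝ) (tb : ℕ → ℕ → Prop) (A a b : ℕ)
    (hne : a ≠ b) (ha : a ∈ ({0, 1} : Finset ℕ)) (hb : b ∈ ({0, 1} : Finset ℕ))
    (hzero : ∀ k, A ≤ k → orb g k = 0) (htb : IsLinearOrder ℕ tb) (hab : tb a b)
    (hbw : IsBasicWAMWith R id g tb) (l : ℕ) :
    HasDrySpell R (Dw0 A a b ha hb) 1 l := by
  have hm := master R id g tb hbw (Dw0 A a b ha hb) (fun i => if i < A then 2 else a) (Ew0 g A)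
    (by intro v; fin_cases v <;> simp [Ew0, orb_zero])
    (Ew0_step g A a b hne ha hb) (Ew0_win g A a b hne ha hb hzero tb htb hab)
  apply hasDrySpell_of_window R (Dw0 A a b ha hb) 1 A l
  intro i hi1 hi2
  rw [(hm i).2]
  show (if i < A then 2 else a) ∉ Aw0 A a b i 1
  have h1 : ¬ i < A := by omega
  simp [Aw0, h1, hne]

end UDS

/-- Every win-based WAM and every loss-based WAM has unbounded
dry spells: for no function `d : ℕ → ℕ` does such a rule have a dry spell
guarantee of `d`. -/
theorem winBased_and_lossBased_WAMs_have_unbounded_dry_spells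
    (R : PerpetualRule) (tb : ℕ → ℕ → Prop) (htb : IsLinearOrder ℕ tb) :
    (∀ g : ℝ → ℝ, IsWinBasedWAM R g tb → ∀ d : ℕ → ℕ, ¬ DrySpellGuarantee R d) ∧
    (∀ f : ℝ → ℝ, IsLossBasedWAM R f tb → ∀ d : ℕ → ℕ, ¬ DrySpellGuarantee R d) := by
  constructor
  · rintro g ⟨hg, hb⟩ d hguar
    by_cases hpos : ∀ k, 0 < UDS.orb g k
    · exact hguar 3 (UDS.Dw2 (d 3)) 0 (UDS.w2_spell R g tb hg hpos hb (d 3))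
    · by_cases hneg : ∃ A, UDS.orb g A < 0
      · obtain ⟨A, hA⟩ := hneg
        exact hguar 3 (UDS.Dw3 A (d 3)) 0 (UDS.w3_spell R g tb hg A hA hb (d 3))
      · push_neg at hpos hneg
        obtain ⟨A, hA⟩ := hpos
        have hA0 : UDS.orb g A = 0 := le_antisymm hA (hneg A)
        have hzero : ∀ k, A ≤ k → UDS.orb g k = 0 := by
          have key : ∀ j, UDS.orb g (A + j) = 0 := by
            intro j
            induction j with
            | zero => simpa using hA0
            | succ j ih =>
              have hle : UDS.orb g (A + j + 1) ≤ 0 := by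
                rw [UDS.orb_succ]
                calc g (UDS.orb g (A + j)) ≤ UDS.orb g (A + j) := hg _
                _ = 0 := ih
              exact le_antisymm hle (hneg _)
          intro k hk
          have := key (k - A)
          rwa [Nat.add_sub_cancel' hk] at this
        haveI := htb
        rcases total_of tb 0 1 with h01 | h10
        · exact hguar 2 (UDS.Dw0 A 0 1 (by decide) (by decide)) 1
            (UDS.w0_spell R g tb A 0 1 (by decide) (by decide) (by decide) hzero htb h01 hb
              (d 2))
        · exact hguar 2 (UDS.Dw0 A 1 0 (by decide) (by decide)) 1
            (UDS.w0_spell R g tb A 1 0 (by decide) (by decide) (by decide) hzero htb h10 hb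
              (d 2))
  · rintro f ⟨hf, hb⟩ d hguar
    exact hguar 3 (UDS.Dlb (d 3)) 0 (UDS.lb_spell R f tb hf hb (d 3))
end

section
/- No loss-based WAM satisfies simple proportionality. -/
open scoped Classical
open Finset

/-! ### Auxiliary material for Statement 9 -/

/-- In a loss-based WAM the weight of a voter is `f` iterated (number of losses) times. -/
private lemma bw_eq_aux (R : PerpetualRule) (f : ℝ → ℝ) (n : ℕ) (D : DecisionSeq n) :
    ∀ (t : ℕ) (v : Fin n), basicWeight R f id n D t v =
      f^[((Finset.range t).filter fun i => R.choice n D i ∉ D.A i v).card] 1 := by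
  intro t
  induction t with
  | zero => intro v; simp [basicWeight]
  | succ t ih =>
    intro v
    have hsplit : ((Finset.range (t+1)).filter fun i => R.choice n D i ∉ D.A i v)
        = if R.choice n D t ∉ D.A t v
          then insert t ((Finset.range t).filter fun i => R.choice n D i ∉ D.A i v)
          else ((Finset.range t).filter fun i => R.choice n D i ∉ D.A i v) := by
      rw [Finset.range_add_one, Finset.filter_insert]
    by_cases h : R.choice n D t ∈ D.A t v
    · have h1 : basicWeight R f id n D (t+1) v = basicWeight R f id n D t v := by
        simp [basicWeight, h]
      rw [h1, hsplit, if_neg (by simpa using h), ih]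
    · have h1 : basicWeight R f id n D (t+1) v = f (basicWeight R f id n D t v) := by
        simp [basicWeight, h]
      rw [h1, hsplit, if_pos h, Finset.card_insert_of_notMem (by simp),
        Function.iterate_succ_apply', ih]

/-- Decision sequence with three voters approving alternative `3` and three
singleton voters approving `0`, `1`, `2`. -/
private def D1seq : DecisionSeq 6 where
  C := fun _ => {0, 1, 2, 3}
  A := fun _ => ![{3}, {3}, {3}, {0}, {1}, {2}]
  approvalSub := by intro i v; fin_cases v <;> (dsimp only) <;> decide
  approvalNonempty := by intro i v; fin_cases v <;> (dsimp only) <;> decide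

/-- Decision sequence with six voters approving `aA` and two approving `bA`. -/
private def D2seq (aA bA : ℕ) : DecisionSeq 8 where
  C := fun _ => {aA, bA}
  A := fun _ v => if (v : ℕ) < 6 then {aA} else {bA}
  approvalSub := by
    intro i v; split_ifs <;> simp
  approvalNonempty := by
    intro i v; split_ifs <;> simp

/-- No loss-based WAM satisfies simple proportionality. -/
theorem lossBased_WAM_fails_simple_proportionality
    (R : PerpetualRule) (f : ℝ → ℝ) (tb : ℕ → ℕ → Prop) (htb : IsLinearOrder ℕ tb)
    (hR : IsLossBasedWAM R f tb) :
    ¬ SatisfiesSimpleProportionality R := by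
  obtain ⟨hf, hW⟩ := hR
  intro hSP
  haveI := htb
  -- monotonicity of iterated weights
  have hmono : Monotone fun k => f^[k] (1 : ℝ) := by
    apply monotone_nat_of_le_succ
    intro k
    rw [Function.iterate_succ_apply']
    exact hf _
  ---------------------------------------------------------------------------
  -- PART A : derive  3 * f^[2] 1 ≤ f^[5] 1  from the instance `D1seq`.
  ---------------------------------------------------------------------------
  have hSimple1 : D1seq.IsSimple := by
    refine ⟨fun _ => rfl, fun _ => rfl, ?_⟩
    intro v; fin_cases v <;> rfl
  have hsat1 := hSP 6 D1seq hSimple1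
  have hchmem1 : ∀ i, R.choice 6 D1seq i = 0 ∨ R.choice 6 D1seq i = 1 ∨
      R.choice 6 D1seq i = 2 ∨ R.choice 6 D1seq i = 3 := by
    intro i
    have h := R.choice_mem 6 D1seq i
    simpa [D1seq] using h
  -- satAt rewriting helper
  have hsat_eq : ∀ (v : Fin 6) (c : ℕ), (∀ i, D1seq.A i v = {c}) →
      satAt R D1seq v 6 = ((Finset.range 6).filter fun i => R.choice 6 D1seq i = c).card := by
    intro v c hv
    rw [satAt]
    apply congrArg
    apply Finset.filter_congr
    intro i _
    simp [hv i]
  -- weight rewriting helper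
  have hloss_eq : ∀ (t' : ℕ) (v : Fin 6) (c : ℕ), (∀ i, D1seq.A i v = {c}) →
      basicWeight R f id 6 D1seq t' v =
        f^[((Finset.range t').filter fun i => ¬ R.choice 6 D1seq i = c).card] 1 := by
    intro t' v c hv
    rw [bw_eq_aux]
    have h : ((Finset.range t').filter fun i => R.choice 6 D1seq i ∉ D1seq.A i v)
        = ((Finset.range t').filter fun i => ¬ R.choice 6 D1seq i = c) := by
      apply Finset.filter_congr
      intro i _
      simp [hv i]
    rw [h]
  have hgs0 : groupSize D1seq 0 = 3 := by
    rw [groupSize]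
    rw [show (Finset.univ.filter fun u : Fin 6 => D1seq.A 0 u = D1seq.A 0 0) = {0, 1, 2} from by
      ext u; fin_cases u <;> decide]
    decide
  have hw3 : ((Finset.range 6).filter fun i => R.choice 6 D1seq i = 3).card = 3 := by
    have h := hsat1 0
    rwa [hsat_eq 0 3 (fun _ => rfl), hgs0] at h
  have hS3 : ((Finset.range 6).filter fun i => ¬ R.choice 6 D1seq i = 3).card = 3 := by
    have h := Finset.card_filter_add_card_filter_not (s := Finset.range 6)
      (p := fun i => R.choice 6 D1seq i = 3)
    rw [Finset.card_range] at h
    omega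
  have hSne : ((Finset.range 6).filter fun i => ¬ R.choice 6 D1seq i = 3).Nonempty :=
    Finset.card_pos.mp (by omega)
  set t := (((Finset.range 6).filter fun i => ¬ R.choice 6 D1seq i = 3).max' hSne) with htdef
  have htmem : t ∈ ((Finset.range 6).filter fun i => ¬ R.choice 6 D1seq i = 3) :=
    Finset.max'_mem _ hSne
  have ht6 : t < 6 := Finset.mem_range.mp (Finset.mem_filter.mp htmem).1
  have htne : ¬ R.choice 6 D1seq t = 3 := (Finset.mem_filter.mp htmem).2
  have hprev : ((Finset.range t).filter fun i => ¬ R.choice 6 D1seq i = 3).card = 2 := by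
    have herase : ((Finset.range t).filter fun i => ¬ R.choice 6 D1seq i = 3)
        = ((Finset.range 6).filter fun i => ¬ R.choice 6 D1seq i = 3).erase t := by
      ext i
      simp only [Finset.mem_erase, Finset.mem_filter, Finset.mem_range]
      constructor
      · rintro ⟨hit, hne3⟩
        exact ⟨by omega, by omega, hne3⟩
      · rintro ⟨hit, hi6, hne3⟩
        refine ⟨?_, hne3⟩
        have hle := Finset.le_max'
          ((Finset.range 6).filter fun i => ¬ R.choice 6 D1seq i = 3) i
          (Finset.mem_filter.mpr ⟨Finset.mem_range.mpr hi6, hne3⟩)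
        omega
    rw [herase, Finset.card_erase_of_mem htmem, hS3]
  -- generic single-voter argument
  have main : ∀ (jn : ℕ) (vj : Fin 6), (∀ i, D1seq.A i vj = {jn}) →
      (Finset.univ.filter fun v : Fin 6 => jn ∈ D1seq.A t v) = {vj} →
      groupSize D1seq vj = 1 →
      R.choice 6 D1seq t = jn → 3 * f^[2] (1 : ℝ) ≤ f^[t] 1 := by
    intro jn vj hAv hfil hgs hct
    have hone : ((Finset.range 6).filter fun i => R.choice 6 D1seq i = jn).card = 1 := by
      have h := hsat1 vj
      rwa [hsat_eq vj jn hAv, hgs] at h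
    obtain ⟨a, ha⟩ := Finset.card_eq_one.mp hone
    have hta : t = a := by
      have h : t ∈ ({a} : Finset ℕ) :=
        ha ▸ (Finset.mem_filter.mpr ⟨Finset.mem_range.mpr ht6, hct⟩)
      simpa using h
    have hzero : ((Finset.range t).filter fun i => R.choice 6 D1seq i = jn).card = 0 := by
      rw [Finset.card_eq_zero, Finset.eq_empty_iff_forall_notMem]
      intro i hi
      have hi' := Finset.mem_filter.mp hi
      have hlt := Finset.mem_range.mp hi'.1
      have h6 : i ∈ ((Finset.range 6).filter fun i => R.choice 6 D1seq i = jn) :=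
        Finset.mem_filter.mpr ⟨Finset.mem_range.mpr (lt_trans hlt ht6), hi'.2⟩
      rw [ha] at h6
      have := Finset.mem_singleton.mp h6
      omega
    have hlossvj : ((Finset.range t).filter fun i => ¬ R.choice 6 D1seq i = jn).card = t := by
      have h := Finset.card_filter_add_card_filter_not (s := Finset.range t)
        (p := fun i => R.choice 6 D1seq i = jn)
      rw [Finset.card_range] at h
      omega
    have hβj : basicWeight R f id 6 D1seq t vj = f^[t] 1 := by
      rw [hloss_eq t vj jn hAv, hlossvj]
    have hsel := hW 6 D1seq t
    have hle := hsel.2.1 3 (by simp [D1seq])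
    have hLHS : approvalScore (basicWeight R f id 6 D1seq t) (D1seq.A t) 3
        = 3 * f^[2] (1 : ℝ) := by
      rw [approvalScore, ← Finset.sum_filter]
      have hAfil : (Finset.univ.filter fun v : Fin 6 => (3 : ℕ) ∈ D1seq.A t v)
          = ({0, 1, 2} : Finset (Fin 6)) := by
        show (Finset.univ.filter fun v : Fin 6 => (3 : ℕ) ∈ D1seq.A 0 v)
          = ({0, 1, 2} : Finset (Fin 6))
        ext v; fin_cases v <;> decide
      rw [hAfil]
      rw [Finset.sum_insert (by decide), Finset.sum_insert (by decide), Finset.sum_singleton]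
      rw [hloss_eq t 0 3 (fun _ => rfl), hloss_eq t 1 3 (fun _ => rfl),
        hloss_eq t 2 3 (fun _ => rfl), hprev]
      ring
    have hRHS : approvalScore (basicWeight R f id 6 D1seq t) (D1seq.A t) (R.choice 6 D1seq t)
        = f^[t] 1 := by
      rw [hct, approvalScore, ← Finset.sum_filter, hfil, Finset.sum_singleton, hβj]
    rw [hLHS, hRHS] at hle
    exact hle
  have keyA : 3 * f^[2] (1 : ℝ) ≤ f^[5] 1 := by
    have hmt : f^[t] (1 : ℝ) ≤ f^[5] 1 := hmono (by omega)
    have hgs3 : groupSize D1seq 3 = 1 := by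
      rw [groupSize]
      rw [show (Finset.univ.filter fun u : Fin 6 => D1seq.A 0 u = D1seq.A 0 3) = {3} from by
        ext u; fin_cases u <;> decide]
      decide
    have hgs4 : groupSize D1seq 4 = 1 := by
      rw [groupSize]
      rw [show (Finset.univ.filter fun u : Fin 6 => D1seq.A 0 u = D1seq.A 0 4) = {4} from by
        ext u; fin_cases u <;> decide]
      decide
    have hgs5 : groupSize D1seq 5 = 1 := by
      rw [groupSize]
      rw [show (Finset.univ.filter fun u : Fin 6 => D1seq.A 0 u = D1seq.A 0 5) = {5} from by
        ext u; fin_cases u <;> decide]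
      decide
    rcases hchmem1 t with h | h | h | h
    · refine le_trans (main 0 3 (fun _ => rfl) ?_ hgs3 h) hmt
      show (Finset.univ.filter fun v : Fin 6 => (0 : ℕ) ∈ D1seq.A 0 v) = {3}
      ext v; fin_cases v <;> decide
    · refine le_trans (main 1 4 (fun _ => rfl) ?_ hgs4 h) hmt
      show (Finset.univ.filter fun v : Fin 6 => (1 : ℕ) ∈ D1seq.A 0 v) = {4}
      ext v; fin_cases v <;> decide
    · refine le_trans (main 2 5 (fun _ => rfl) ?_ hgs5 h) hmt
      show (Finset.univ.filter fun v : Fin 6 => (2 : ℕ) ∈ D1seq.A 0 v) = {5}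
      ext v; fin_cases v <;> decide
    · exact absurd h htne
  ---------------------------------------------------------------------------
  -- PART B : the instance `D2seq` now contradicts `keyA`.
  ---------------------------------------------------------------------------
  obtain ⟨aA, bA, hne, hba⟩ : ∃ aA bA : ℕ, aA ≠ bA ∧ tb bA aA := by
    rcases total_of tb 0 1 with h | h
    · exact ⟨1, 0, one_ne_zero, h⟩
    · exact ⟨0, 1, zero_ne_one, h⟩
  have hSimple2 : (D2seq aA bA).IsSimple := by
    refine ⟨fun _ => rfl, fun _ => rfl, ?_⟩
    intro v
    show (if ((v : ℕ) < 6) then ({aA} : Finset ℕ) else {bA}).card = 1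
    split_ifs <;> simp
  have hsat2 := hSP 8 (D2seq aA bA) hSimple2
  have hch2 : ∀ i, R.choice 8 (D2seq aA bA) i = aA ∨ R.choice 8 (D2seq aA bA) i = bA := by
    intro i
    have h := R.choice_mem 8 (D2seq aA bA) i
    simpa [D2seq] using h
  have hAa : ∀ (i : ℕ) (v : Fin 8), (v : ℕ) < 6 → (D2seq aA bA).A i v = {aA} := by
    intro i v hv; simp [D2seq, hv]
  have hAb : ∀ (i : ℕ) (v : Fin 8), ¬ (v : ℕ) < 6 → (D2seq aA bA).A i v = {bA} := by
    intro i v hv; simp [D2seq, hv]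
  have hgs7 : groupSize (D2seq aA bA) 7 = 2 := by
    rw [groupSize]
    rw [show (Finset.univ.filter fun u : Fin 8 => (D2seq aA bA).A 0 u = (D2seq aA bA).A 0 7)
          = ({6, 7} : Finset (Fin 8)) from by
      ext u
      fin_cases u <;> simp [D2seq, hne, show ((0:Fin 8):ℕ) = 0 from rfl, show ((1:Fin 8):ℕ) = 1 from rfl, show ((2:Fin 8):ℕ) = 2 from rfl, show ((3:Fin 8):ℕ) = 3 from rfl, show ((4:Fin 8):ℕ) = 4 from rfl, show ((5:Fin 8):ℕ) = 5 from rfl, show ((6:Fin 8):ℕ) = 6 from rfl, show ((7:Fin 8):ℕ) = 7 from rfl]]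
    decide
  have hsatB : ((Finset.range 8).filter fun i => R.choice 8 (D2seq aA bA) i = bA).card = 2 := by
    have h := hsat2 7
    rw [hgs7, satAt] at h
    rw [← h]
    apply congrArg
    apply Finset.filter_congr
    intro i _
    simp [hAb i 7 (by decide)]
  -- weight lemmas
  have hlossA : ∀ (t' : ℕ) (v : Fin 8), (v : ℕ) < 6 →
      basicWeight R f id 8 (D2seq aA bA) t' v =
        f^[((Finset.range t').filter fun i => R.choice 8 (D2seq aA bA) i = bA).card] 1 := by
    intro t' v hv
    rw [bw_eq_aux]
    have h : ((Finset.range t').filter fun i => R.choice 8 (D2seq aA bA) i ∉ (D2seq aA bA).A i v)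
        = ((Finset.range t').filter fun i => R.choice 8 (D2seq aA bA) i = bA) := by
      apply Finset.filter_congr
      intro i _
      rw [hAa i v hv]
      rcases hch2 i with h | h <;> simp [h, hne, Ne.symm hne]
    rw [h]
  have hlossB : ∀ (t' : ℕ) (v : Fin 8), ¬ (v : ℕ) < 6 →
      basicWeight R f id 8 (D2seq aA bA) t' v =
        f^[((Finset.range t').filter fun i => ¬ R.choice 8 (D2seq aA bA) i = bA).card] 1 := by
    intro t' v hv
    rw [bw_eq_aux]
    have h : ((Finset.range t').filter fun i => R.choice 8 (D2seq aA bA) i ∉ (D2seq aA bA).A i v)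
        = ((Finset.range t').filter fun i => ¬ R.choice 8 (D2seq aA bA) i = bA) := by
      apply Finset.filter_congr
      intro i _
      rw [hAb i v hv]
      simp
    rw [h]
  -- key round lemma
  have keyB : ∀ t' : ℕ, t' ≤ 7 →
      ((Finset.range t').filter fun i => R.choice 8 (D2seq aA bA) i = bA).card + 5 = t' →
      R.choice 8 (D2seq aA bA) t' = bA := by
    intro t' ht7 ht5
    rcases hch2 t' with hc | hc
    swap
    · exact hc
    exfalso
    have hnegcard : ((Finset.range t').filter fun i => ¬ R.choice 8 (D2seq aA bA) i = bA).card
        = 5 := by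
      have h := Finset.card_filter_add_card_filter_not (s := Finset.range t')
        (p := fun i => R.choice 8 (D2seq aA bA) i = bA)
      rw [Finset.card_range] at h
      omega
    have hwt2 : ((Finset.range t').filter fun i => R.choice 8 (D2seq aA bA) i = bA).card ≤ 2 := by
      omega
    have hsA : approvalScore (basicWeight R f id 8 (D2seq aA bA) t') ((D2seq aA bA).A t') aA
        = 6 * f^[((Finset.range t').filter fun i => R.choice 8 (D2seq aA bA) i = bA).card] 1 := by
      rw [approvalScore, ← Finset.sum_filter]
      have hfil : (Finset.univ.filter fun v : Fin 8 => aA ∈ (D2seq aA bA).A t' v)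
          = Finset.univ.filter (fun v : Fin 8 => (v : ℕ) < 6) := by
        ext v
        simp only [Finset.mem_filter, Finset.mem_univ, true_and]
        by_cases hv : (v : ℕ) < 6
        · simp [hAa t' v hv, hv]
        · simp [hAb t' v hv, hv, hne]
      rw [hfil]
      rw [Finset.sum_congr rfl
        (fun v hv => hlossA t' v (by simpa using (Finset.mem_filter.mp hv).2))]
      rw [Finset.sum_const]
      rw [show (Finset.univ.filter fun v : Fin 8 => (v : ℕ) < 6).card = 6 from by decide]
      rw [nsmul_eq_mul]
      norm_num
    have hsB : approvalScore (basicWeight R f id 8 (D2seq aA bA) t') ((D2seq aA bA).A t') bA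
        = 2 * f^[5] (1 : ℝ) := by
      rw [approvalScore, ← Finset.sum_filter]
      have hfil : (Finset.univ.filter fun v : Fin 8 => bA ∈ (D2seq aA bA).A t' v)
          = ({6, 7} : Finset (Fin 8)) := by
        ext v
        simp only [Finset.mem_filter, Finset.mem_univ, true_and]
        fin_cases v <;> simp [D2seq, hne, Ne.symm hne, show ((0:Fin 8):ℕ) = 0 from rfl, show ((1:Fin 8):ℕ) = 1 from rfl, show ((2:Fin 8):ℕ) = 2 from rfl, show ((3:Fin 8):ℕ) = 3 from rfl, show ((4:Fin 8):ℕ) = 4 from rfl, show ((5:Fin 8):ℕ) = 5 from rfl, show ((6:Fin 8):ℕ) = 6 from rfl, show ((7:Fin 8):ℕ) = 7 from rfl]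
      rw [hfil, Finset.sum_pair (by decide : (6 : Fin 8) ≠ 7)]
      rw [hlossB t' 6 (by decide), hlossB t' 7 (by decide), hnegcard]
      ring
    have hsel := hW 8 (D2seq aA bA) t'
    have hle := hsel.2.1 bA (by simp [D2seq])
    rw [hc, hsA, hsB] at hle
    have h1 : f^[((Finset.range t').filter fun i => R.choice 8 (D2seq aA bA) i = bA).card] (1 : ℝ)
        ≤ f^[2] 1 := hmono hwt2
    have h2 : (6 : ℝ) * f^[((Finset.range t').filter fun i =>
        R.choice 8 (D2seq aA bA) i = bA).card] 1 ≤ 2 * f^[5] 1 := by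
      linarith
    have heq : approvalScore (basicWeight R f id 8 (D2seq aA bA) t') ((D2seq aA bA).A t') bA
        = approvalScore (basicWeight R f id 8 (D2seq aA bA) t') ((D2seq aA bA).A t')
          (R.choice 8 (D2seq aA bA) t') := by
      rw [hc, hsA, hsB]
      linarith
    have htb2 := hsel.2.2 bA (by simp [D2seq]) heq
    rw [hc] at htb2
    exact hne (antisymm htb2 hba)
  -- counting argument
  have hwmono : ∀ t' : ℕ,
      ((Finset.range t').filter fun i => R.choice 8 (D2seq aA bA) i = bA).card ≤
      ((Finset.range (t' + 1)).filter fun i => R.choice 8 (D2seq aA bA) i = bA).card := by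
    intro t'
    apply Finset.card_le_card
    apply Finset.filter_subset_filter
    exact Finset.range_subset_range.mpr (Nat.le_succ t')
  have hwsucc : ∀ t' : ℕ, R.choice 8 (D2seq aA bA) t' = bA →
      ((Finset.range (t' + 1)).filter fun i => R.choice 8 (D2seq aA bA) i = bA).card =
      ((Finset.range t').filter fun i => R.choice 8 (D2seq aA bA) i = bA).card + 1 := by
    intro t' h
    rw [Finset.range_add_one, Finset.filter_insert, if_pos h,
      Finset.card_insert_of_notMem (by simp)]
  have claim : ∀ t' : ℕ, t' ≤ 8 →
      t' ≤ ((Finset.range t').filter fun i => R.choice 8 (D2seq aA bA) i = bA).card + 5 := by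
    intro t'
    induction t' with
    | zero => intro _; omega
    | succ t' ih =>
      intro h8
      have iht := ih (by omega)
      by_cases hcase :
          ((Finset.range t').filter fun i => R.choice 8 (D2seq aA bA) i = bA).card + 5 = t'
      · have hb := keyB t' (by omega) hcase
        have hs := hwsucc t' hb
        omega
      · have hm := hwmono t'
        omega
  have h8 := claim 8 le_rfl
  omega
end

section
/- Let R be a win-based WAM and define the sequence w by w_0 = 1 and w_{j+1} = g(w_j) (so w_j is the weight of a voter who has won j rounds). Then R satisfies simple proportionality if and only if x·w_x < (y+1)·w_y for all integers x, y ≥ 0. -/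
open scoped Classical
open Finset

/-! ### Auxiliary lemmas for Statement 10 -/

/-- Number of wins of alternative `c` in the first `t` rounds. -/
private def Wc (R : PerpetualRule) {n : ℕ} (D : DecisionSeq n) (c t : ℕ) : ℕ :=
  ((Finset.range t).filter fun i => R.choice n D i = c).card

/-- Number of voters whose (singleton) approval set is `{c}`. -/
private def ncount {n : ℕ} (D : DecisionSeq n) (c : ℕ) : ℕ :=
  (Finset.univ.filter fun u : Fin n => D.A 0 u = {c}).card

private lemma Wc_succ (R : PerpetualRule) {n : ℕ} (D : DecisionSeq n) (c t : ℕ) :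
    Wc R D c (t + 1) = if R.choice n D t = c then Wc R D c t + 1 else Wc R D c t := by
  unfold Wc
  rw [Finset.range_add_one, Finset.filter_insert]
  split_ifs with h
  · rw [Finset.card_insert_of_notMem (by simp)]
  · rfl

private lemma winWeight_eq (R : PerpetualRule) (g : ℝ → ℝ) (n : ℕ) (D : DecisionSeq n)
    (k : ℕ) (v : Fin n) :
    basicWeight R id g n D k v = g^[satAt R D v k] 1 := by
  induction k with
  | zero => simp [basicWeight, satAt]
  | succ k ih =>
    have hs : satAt R D v (k + 1) =
        if R.choice n D k ∈ D.A k v then satAt R D v k + 1 else satAt R D v k := by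
      unfold satAt
      rw [Finset.range_add_one, Finset.filter_insert]
      split_ifs with h
      · rw [Finset.card_insert_of_notMem (by simp)]
      · rfl
    simp only [basicWeight]
    split_ifs with h
    · rw [hs, if_pos h, ih, Function.iterate_succ_apply']
    · rw [hs, if_neg h, ih, id]

private lemma iterAnti (g : ℝ → ℝ) (hg : ∀ x : ℝ, g x ≤ x) :
    Antitone fun j => g^[j] (1 : ℝ) := by
  apply antitone_nat_of_succ_le
  intro j
  rw [Function.iterate_succ_apply']
  exact hg _

private lemma finCountLt (n x : ℕ) (hx : x ≤ n) :
    (Finset.univ.filter fun u : Fin n => (u : ℕ) < x).card = x := by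
  rcases eq_or_lt_of_le hx with h | h
  · subst h
    rw [Finset.filter_true_of_mem (fun u _ => u.isLt), Finset.card_univ, Fintype.card_fin]
  · have heq : (Finset.univ.filter fun u : Fin n => (u : ℕ) < x) = Finset.Iio ⟨x, h⟩ := by
      ext u; simp [Fin.lt_def]
    rw [heq, Fin.card_Iio]

private lemma satAt_eq_W (R : PerpetualRule) {n : ℕ} (D : DecisionSeq n) (hs : D.IsSimple)
    (v : Fin n) (c : ℕ) (hc : D.A 0 v = {c}) (t : ℕ) :
    satAt R D v t = Wc R D c t := by
  unfold satAt Wc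
  congr 1
  apply Finset.filter_congr
  intro i _
  have hAi : D.A i v = {c} := by rw [hs.1 i]; exact hc
  simp [hAi]

private lemma score_simple (R : PerpetualRule) (g : ℝ → ℝ) {n : ℕ} (D : DecisionSeq n)
    (hs : D.IsSimple) (k c : ℕ) :
    approvalScore (basicWeight R id g n D k) (D.A k) c =
      (ncount D c : ℝ) * g^[Wc R D c k] 1 := by
  unfold approvalScore
  rw [hs.1 k]
  have hmem : ∀ v : Fin n, (c ∈ D.A 0 v) ↔ D.A 0 v = {c} := by
    intro v
    obtain ⟨d, hd⟩ := Finset.card_eq_one.mp (hs.2.2 v)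
    rw [hd]
    simp [Finset.singleton_inj, eq_comm]
  have hcongr : ∀ v ∈ (Finset.univ : Finset (Fin n)),
      (if c ∈ D.A 0 v then basicWeight R id g n D k v else 0) =
      (if D.A 0 v = {c} then g^[Wc R D c k] 1 else 0) := by
    intro v _
    by_cases h : D.A 0 v = {c}
    · rw [if_pos ((hmem v).mpr h), if_pos h, winWeight_eq, satAt_eq_W R D hs v c h]
    · rw [if_neg (fun hcc => h ((hmem v).mp hcc)), if_neg h]
  rw [Finset.sum_congr rfl hcongr, ← Finset.sum_filter, Finset.sum_const, nsmul_eq_mul]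
  rfl

private lemma sum_Wc (R : PerpetualRule) {n : ℕ} (D : DecisionSeq n) (hs : D.IsSimple)
    (t : ℕ) : ∑ c ∈ D.C 0, Wc R D c t = t := by
  unfold Wc
  have h := Finset.card_eq_sum_card_fiberwise (s := Finset.range t) (t := D.C 0)
    (f := fun i => R.choice n D i)
    (fun i _ => by rw [← hs.2.1 i]; exact R.choice_mem n D i)
  rw [Finset.card_range] at h
  exact h.symm

private lemma sum_ncount {n : ℕ} (D : DecisionSeq n) (hs : D.IsSimple) :
    ∑ c ∈ D.C 0, ncount D c = n := by
  obtain ⟨cv, hcv⟩ : ∃ cv : Fin n → ℕ, ∀ u, D.A 0 u = {cv u} := by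
    choose cv hcv using fun u => Finset.card_eq_one.mp (hs.2.2 u)
    exact ⟨cv, hcv⟩
  have hfib : ∀ c, ncount D c = (Finset.univ.filter fun u : Fin n => cv u = c).card := by
    intro c
    unfold ncount
    congr 1
    apply Finset.filter_congr
    intro u _
    rw [hcv u]
    exact Finset.singleton_inj
  simp only [hfib]
  have h := Finset.card_eq_sum_card_fiberwise (s := (Finset.univ : Finset (Fin n)))
    (t := D.C 0) (f := cv)
    (fun u _ => D.approvalSub 0 u (by rw [hcv u]; exact Finset.mem_singleton_self _))
  rw [Finset.card_univ, Fintype.card_fin] at h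
  exact h.symm

/-- The two-group simple decision sequence used in the necessity direction. -/
private def simpleTwo (a b x n : ℕ) : DecisionSeq n where
  C := fun _ => {a, b}
  A := fun _ v => if (v : ℕ) < x then {a} else {b}
  approvalSub := by intro i v; split_ifs <;> simp
  approvalNonempty := by intro i v; split_ifs <;> simp

/-- A win-based WAM with weight sequence `w_j = g^[j] 1`
satisfies simple proportionality iff `x·w_x < (y+1)·w_y` for all `x, y ≥ 0`. -/
theorem winBased_WAM_simple_proportionality_characterization
    (R : PerpetualRule) (g : ℝ → ℝ) (tb : ℕ → ℕ → Prop) (htb : IsLinearOrder ℕ tb)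
    (hR : IsWinBasedWAM R g tb) :
    SatisfiesSimpleProportionality R ↔
      ∀ x y : ℕ, (x : ℝ) * g^[x] 1 < ((y : ℝ) + 1) * g^[y] 1 := by
  obtain ⟨hg, hB⟩ := hR
  have hanti := iterAnti g hg
  constructor
  · -- proportionality implies the inequality
    intro hprop x y
    by_contra hge
    push_neg at hge
    obtain ⟨a, b, hab, htab⟩ : ∃ a b : ℕ, a ≠ b ∧ tb a b := by
      rcases htb.total 0 1 with h | h
      exacts [⟨0, 1, by norm_num, h⟩, ⟨1, 0, by norm_num, h⟩]
    set n := x + y + 1 with hn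
    have hxn : x < n := by omega
    have hA0 : ∀ (i : ℕ) (u : Fin n),
        (simpleTwo a b x n).A i u = if (u : ℕ) < x then {a} else {b} := fun _ _ => rfl
    have hsimp : (simpleTwo a b x n).IsSimple := by
      refine ⟨fun i => rfl, fun i => rfl, fun v => ?_⟩
      rw [hA0 0 v]
      split_ifs <;> simp
    have hnca : ncount (simpleTwo a b x n) a = x := by
      unfold ncount
      rw [Finset.filter_congr (q := fun u : Fin n => (u : ℕ) < x) ?_]
      · exact finCountLt n x (by omega)
      · intro u _
        rw [hA0 0 u]
        split_ifs with h
        · simp [h]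
        · simp [h, Finset.singleton_inj, Ne.symm hab]
    have hncb : ncount (simpleTwo a b x n) b = y + 1 := by
      unfold ncount
      rw [Finset.filter_congr (q := fun u : Fin n => ¬ (u : ℕ) < x) ?_]
      · rw [Finset.filter_not, Finset.card_sdiff_of_subset (Finset.filter_subset _ _),
          Finset.card_univ, Fintype.card_fin, finCountLt n x (by omega)]
        omega
      · intro u _
        rw [hA0 0 u]
        split_ifs with h
        · simp [h, Finset.singleton_inj, hab]
        · simp [h]
    have hv0 : (simpleTwo a b x n).A 0 ⟨x, hxn⟩ = {b} := by
      rw [hA0 0 ⟨x, hxn⟩]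
      simp
    have hgs : groupSize (simpleTwo a b x n) ⟨x, hxn⟩ = ncount (simpleTwo a b x n) b := by
      unfold groupSize ncount
      congr 1
      apply Finset.filter_congr
      intro u _
      rw [hv0]
    have hsn : Wc R (simpleTwo a b x n) b n = y + 1 := by
      rw [← satAt_eq_W R (simpleTwo a b x n) hsimp ⟨x, hxn⟩ b hv0 n,
        hprop n (simpleTwo a b x n) hsimp ⟨x, hxn⟩, hgs, hncb]
    have hex : ∃ t, y + 1 ≤ Wc R (simpleTwo a b x n) b t := ⟨n, le_of_eq hsn.symm⟩
    have hT0 : Nat.find hex ≠ 0 := by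
      intro h
      have hspec := Nat.find_spec hex
      rw [h] at hspec
      simp [Wc] at hspec
    obtain ⟨t, ht⟩ := Nat.exists_eq_succ_of_ne_zero hT0
    have hPT : y + 1 ≤ Wc R (simpleTwo a b x n) b (t + 1) := by
      have h := Nat.find_spec hex
      rw [ht] at h
      exact h
    have hnotP : ¬ y + 1 ≤ Wc R (simpleTwo a b x n) b t := Nat.find_min hex (by omega)
    have hst : Wc R (simpleTwo a b x n) b t = y ∧ R.choice n (simpleTwo a b x n) t = b := by
      rw [Wc_succ] at hPT
      split_ifs at hPT with h
      · exact ⟨by omega, h⟩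
      · omega
    have htn : t < n := by
      have h : Nat.find hex ≤ n := Nat.find_le (le_of_eq hsn.symm)
      omega
    have hpart : ∀ i ∈ Finset.range t,
        (¬ R.choice n (simpleTwo a b x n) i = a) ↔ R.choice n (simpleTwo a b x n) i = b := by
      intro i _
      have hmem : R.choice n (simpleTwo a b x n) i ∈ ({a, b} : Finset ℕ) :=
        R.choice_mem n (simpleTwo a b x n) i
      rw [Finset.mem_insert, Finset.mem_singleton] at hmem
      rcases hmem with h | h <;> simp [h, hab, Ne.symm hab]
    have hWab : Wc R (simpleTwo a b x n) a t + Wc R (simpleTwo a b x n) b t = t := by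
      have hcard := Finset.card_filter_add_card_filter_not
        (s := Finset.range t) (p := fun i => R.choice n (simpleTwo a b x n) i = a)
      rw [Finset.filter_congr hpart, Finset.card_range] at hcard
      exact hcard
    have hWax : Wc R (simpleTwo a b x n) a t ≤ x := by omega
    have hsel := hB n (simpleTwo a b x n) t
    rw [hst.2] at hsel
    have hamem : a ∈ (simpleTwo a b x n).C t := by
      show a ∈ ({a, b} : Finset ℕ)
      simp
    have hle := hsel.2.1 a hamem
    have hsca : approvalScore (basicWeight R id g n (simpleTwo a b x n) t)
        ((simpleTwo a b x n).A t) a = (x : ℝ) * g^[Wc R (simpleTwo a b x n) a t] 1 := by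
      rw [score_simple R g (simpleTwo a b x n) hsimp t a, hnca]
    have hscb : approvalScore (basicWeight R id g n (simpleTwo a b x n) t)
        ((simpleTwo a b x n).A t) b = ((y : ℝ) + 1) * g^[y] 1 := by
      rw [score_simple R g (simpleTwo a b x n) hsimp t b, hncb, hst.1]
      push_cast
      ring
    have h2 : ((y : ℝ) + 1) * g^[y] 1 ≤ (x : ℝ) * g^[Wc R (simpleTwo a b x n) a t] 1 :=
      le_trans hge (mul_le_mul_of_nonneg_left (hanti hWax) (Nat.cast_nonneg x))
    have heqn : approvalScore (basicWeight R id g n (simpleTwo a b x n) t)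
        ((simpleTwo a b x n).A t) a = approvalScore (basicWeight R id g n (simpleTwo a b x n) t)
        ((simpleTwo a b x n).A t) b := by
      rw [hsca, hscb]
      rw [hsca, hscb] at hle
      linarith
    have htba := hsel.2.2 a hamem heqn
    exact hab (htb.antisymm a b htab htba)
  · -- the inequality implies proportionality
    intro hcond nn D hsimp v
    have wpos : ∀ j : ℕ, (0 : ℝ) < g^[j] 1 := by
      intro j
      have h := hcond 0 j
      simp only [Nat.cast_zero, zero_mul] at h
      by_contra hle
      push_neg at hle
      nlinarith [h, hle, (Nat.cast_nonneg j : (0 : ℝ) ≤ (j : ℝ))]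
    obtain ⟨cv, hcv⟩ : ∃ cv : Fin nn → ℕ, ∀ u, D.A 0 u = {cv u} := by
      choose cv hcv using fun u => Finset.card_eq_one.mp (hsimp.2.2 u)
      exact ⟨cv, hcv⟩
    have key : ∀ t, t ≤ nn → ∀ c, Wc R D c t ≤ ncount D c := by
      intro t
      induction t with
      | zero => intro _ c; simp [Wc]
      | succ t ih =>
        intro ht c
        have iht := ih (by omega)
        rw [Wc_succ]
        split_ifs with hc
        · rcases lt_or_eq_of_le (iht c) with h | h
          · omega
          · exfalso
            obtain ⟨c', hc'mem, hc'⟩ : ∃ c' ∈ D.C 0, Wc R D c' t < ncount D c' := by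
              by_contra hno
              push_neg at hno
              have hsum : ∑ c' ∈ D.C 0, ncount D c' ≤ ∑ c' ∈ D.C 0, Wc R D c' t :=
                Finset.sum_le_sum fun c' hc' => hno c' hc'
              rw [sum_ncount D hsimp, sum_Wc R D hsimp] at hsum
              omega
            have hsel := hB nn D t
            rw [hc] at hsel
            have hle := hsel.2.1 c' (by rw [hsimp.2.1 t]; exact hc'mem)
            rw [score_simple R g D hsimp t c', score_simple R g D hsimp t c, h] at hle
            have h1 : ((Wc R D c' t : ℝ) + 1) * g^[Wc R D c' t] 1
                ≤ (ncount D c' : ℝ) * g^[Wc R D c' t] 1 := by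
              apply mul_le_mul_of_nonneg_right _ (le_of_lt (wpos _))
              exact_mod_cast hc'
            have h2 := hcond (ncount D c) (Wc R D c' t)
            linarith
        · exact iht c
    have keyn : ∀ c ∈ D.C 0, Wc R D c nn = ncount D c := by
      by_contra hne
      push_neg at hne
      obtain ⟨c, hcmem, hcne⟩ := hne
      have hlt : ∑ c' ∈ D.C 0, Wc R D c' nn < ∑ c' ∈ D.C 0, ncount D c' :=
        Finset.sum_lt_sum (fun c' _ => key nn le_rfl c')
          ⟨c, hcmem, lt_of_le_of_ne (key nn le_rfl c) hcne⟩
      rw [sum_Wc R D hsimp, sum_ncount D hsimp] at hlt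
      omega
    have hcvC : cv v ∈ D.C 0 :=
      D.approvalSub 0 v (by rw [hcv v]; exact Finset.mem_singleton_self _)
    rw [satAt_eq_W R D hsimp v (cv v) (hcv v) nn, keyn _ hcvC]
    unfold ncount groupSize
    congr 1
    apply Finset.filter_congr
    intro u _
    rw [hcv v]
end

section
/- Perpetual Phragmén is not equivalent to any weighted approval method: there is no WAM R such that for every decision sequence D, the choice sequence selected by R equals the choice sequence selected by Perpetual Phragmén (under the same tie-breaking orders). -/
open scoped Classical
open Finset

/-! ### Auxiliary material for the proof -/

/-- Shared profile of the two counterexample decision sequences (rounds 0, 1,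
and ≥ 3); round 2 of the first sequence. -/
def pnwAP : ℕ → Profile 4
  | 0 => ![{1},{0},{0},{0}]
  | 1 => ![{0},{1},{1},{0}]
  | 2 => ![{0},{1},{2},{0}]
  | _ => fun _ => {0}

/-- The second counterexample decision sequence: differs from `pnwAP` only in
round 2. -/
def pnwAQ : ℕ → Profile 4
  | 2 => ![{0},{1},{0,1},{0}]
  | i => pnwAP i

/-- Alternatives in each round. -/
def pnwC : ℕ → Finset ℕ
  | 0 => {0,1} | 1 => {0,1} | 2 => {0,1,2} | _ => {0}

lemma pnwAP_sub : ∀ i v, pnwAP i v ⊆ pnwC i := by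
  intro i v
  rcases i with _|_|_|i
  · fin_cases v <;> decide
  · fin_cases v <;> decide
  · fin_cases v <;> decide
  · exact subset_rfl

lemma pnwAQ_sub : ∀ i v, pnwAQ i v ⊆ pnwC i := by
  intro i v
  rcases i with _|_|_|i
  · fin_cases v <;> decide
  · fin_cases v <;> decide
  · fin_cases v <;> decide
  · exact subset_rfl

lemma pnwAP_ne : ∀ i v, (pnwAP i v).Nonempty := by
  intro i v
  rcases i with _|_|_|i
  · fin_cases v <;> decide
  · fin_cases v <;> decide
  · fin_cases v <;> decide
  · exact ⟨0, Finset.mem_singleton_self 0⟩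

lemma pnwAQ_ne : ∀ i v, (pnwAQ i v).Nonempty := by
  intro i v
  rcases i with _|_|_|i
  · fin_cases v <;> decide
  · fin_cases v <;> decide
  · fin_cases v <;> decide
  · exact ⟨0, Finset.mem_singleton_self 0⟩

/-- The first counterexample decision sequence. -/
def pnwDP : DecisionSeq 4 := ⟨pnwC, pnwAP, pnwAP_sub, pnwAP_ne⟩

/-- The second counterexample decision sequence. -/
def pnwDQ : DecisionSeq 4 := ⟨pnwC, pnwAQ, pnwAQ_sub, pnwAQ_ne⟩

lemma pnw_nl_single (ld : Fin 4 → ℝ) (a : Fin 4) : newLoad ld {a} = 1 + ld a := by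
  rw [newLoad, Finset.sum_singleton, Finset.card_singleton]
  norm_num

lemma pnw_nl_pair (ld : Fin 4 → ℝ) (a b : Fin 4) (hab : a ≠ b) :
    newLoad ld {a,b} = (1 + (ld a + ld b)) / 2 := by
  rw [newLoad, Finset.sum_insert (by simp [hab]), Finset.sum_singleton,
    Finset.card_insert_of_notMem (by simp [hab]), Finset.card_singleton]
  norm_num

lemma pnw_nl_triple (ld : Fin 4 → ℝ) (a b c : Fin 4) (hab : a ≠ b) (hac : a ≠ c)
    (hbc : b ≠ c) : newLoad ld {a,b,c} = (1 + (ld a + (ld b + ld c))) / 3 := by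
  rw [newLoad, Finset.sum_insert (by simp [hab, hac]), Finset.sum_insert (by simp [hbc]),
    Finset.sum_singleton, Finset.card_insert_of_notMem (by simp [hab, hac]),
    Finset.card_insert_of_notMem (by simp [hbc]), Finset.card_singleton]
  norm_num

lemma pnw_enum123 : ∀ S : Finset (Fin 4), S ⊆ {1,2,3} → S.Nonempty →
    S={1}∨S={2}∨S={3}∨S={1,2}∨S={1,3}∨S={2,3}∨S={1,2,3} := by decide

lemma pnw_enum03 : ∀ S : Finset (Fin 4), S ⊆ {0,3} → S.Nonempty →
    S={0}∨S={3}∨S={0,3} := by decide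

lemma pnw_enum12 : ∀ S : Finset (Fin 4), S ⊆ {1,2} → S.Nonempty →
    S={1}∨S={2}∨S={1,2} := by decide

lemma pnw_enum023 : ∀ S : Finset (Fin 4), S ⊆ {0,2,3} → S.Nonempty →
    S={0}∨S={2}∨S={3}∨S={0,2}∨S={0,3}∨S={2,3}∨S={0,2,3} := by decide

lemma pnw_scoreP0 (β : Fin 4 → ℝ) : approvalScore β (pnwAP 2) 0 = β 0 + β 3 := by
  simp [approvalScore, Fin.sum_univ_four, pnwAP]

lemma pnw_scoreP1 (β : Fin 4 → ℝ) : approvalScore β (pnwAP 2) 1 = β 1 := by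
  simp [approvalScore, Fin.sum_univ_four, pnwAP]

lemma pnw_scoreQ0 (β : Fin 4 → ℝ) : approvalScore β (pnwAQ 2) 0 = β 0 + (β 2 + β 3) := by
  simp [approvalScore, Fin.sum_univ_four, pnwAQ]
  ring

lemma pnw_scoreQ1 (β : Fin 4 → ℝ) : approvalScore β (pnwAQ 2) 1 = β 1 + β 2 := by
  simp [approvalScore, Fin.sum_univ_four, pnwAQ]

lemma pnw_card123 : ((({1,2,3} : Finset (Fin 4)).card : ℝ)) = 3 := by
  rw [show ({1,2,3} : Finset (Fin 4)).card = 3 from by decide]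
  norm_num

/-- Perpetual Phragmén is not equivalent to any WAM: for no WAM
`R` (with the same tie-breaking order) do the choices of `R` coincide with those
of Perpetual Phragmén on every decision sequence. -/
theorem perpetualPhragmen_is_not_a_WAM
    (tb : ℕ → ℕ → Prop) (htb : IsLinearOrder ℕ tb)
    (R' : PerpetualRule) (hR' : IsPerpetualPhragmen R' tb)
    (R : PerpetualRule) (hR : IsWAM R tb) :
    ∃ (n : ℕ) (D : DecisionSeq n) (k : ℕ), R.choice n D k ≠ R'.choice n D k := by
  by_contra hcon
  push_neg at hcon
  obtain ⟨load, S, hload0, hstep⟩ := hR'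
  obtain ⟨α, hα1, hαinv, hαsel⟩ := hR
  -- Step 1: the Phragmén loads after the two common history rounds.
  have key : ∀ D : DecisionSeq 4, D.A 0 = pnwAP 0 → D.A 1 = pnwAP 1 →
      D.C 0 = pnwC 0 → D.C 1 = pnwC 1 →
      load 4 D 2 0 = 2/3 ∧ load 4 D 2 1 = 1/3 ∧ load 4 D 2 2 = 1/3 ∧ load 4 D 2 3 = 2/3 := by
    intro D hA0 hA1 hC0 hC1
    -- round 0
    obtain ⟨hne0, happr0, hmin0, -, hupd0⟩ := hstep 4 D 0
    have hw0 : R'.choice 4 D 0 = 0 ∨ R'.choice 4 D 0 = 1 := by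
      have h := R'.choice_mem 4 D 0
      rw [hC0, show pnwC 0 = {0,1} from rfl] at h
      simpa using h
    have hnl0 : ∀ N' : Finset (Fin 4), newLoad (load 4 D 0) N' = 1 / (N'.card : ℝ) := by
      intro N'
      rw [newLoad, Finset.sum_eq_zero fun v _ => hload0 4 D v]
      norm_num
    have hminS0 : newLoad (load 4 D 0) (S 4 D 0) ≤ 1/3 := by
      have h := hmin0 {1,2,3} (by decide)
        ⟨0, fun v hv => by rw [hA0]; fin_cases hv <;> decide⟩
      rw [hnl0 {1,2,3}, pnw_card123] at h
      exact h
    have hS0 : S 4 D 0 = {1,2,3} := by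
      rcases hw0 with hw0 | hw0
      · -- winner 0: the selected set is included in {1,2,3}
        have hsub : S 4 D 0 ⊆ {1,2,3} := by
          intro v hv
          have h := happr0 v hv
          rw [hw0, hA0] at h
          fin_cases v <;> first | decide | (exact absurd h (by decide))
        rcases pnw_enum123 _ hsub hne0 with h|h|h|h|h|h|h
        · rw [h, pnw_nl_single _ 1] at hminS0
          simp only [hload0] at hminS0; norm_num at hminS0
        · rw [h, pnw_nl_single _ 2] at hminS0
          simp only [hload0] at hminS0; norm_num at hminS0
        · rw [h, pnw_nl_single _ 3] at hminS0
          simp only [hload0] at hminS0; norm_num at hminS0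
        · rw [h, pnw_nl_pair _ 1 2 (by decide)] at hminS0
          simp only [hload0] at hminS0; norm_num at hminS0
        · rw [h, pnw_nl_pair _ 1 3 (by decide)] at hminS0
          simp only [hload0] at hminS0; norm_num at hminS0
        · rw [h, pnw_nl_pair _ 2 3 (by decide)] at hminS0
          simp only [hload0] at hminS0; norm_num at hminS0
        · exact h
      · -- winner 1: the selected set would be {0}, contradicting minimality
        have hsub : S 4 D 0 ⊆ {0} := by
          intro v hv
          have h := happr0 v hv
          rw [hw0, hA0] at h
          fin_cases v <;> first | decide | (exact absurd h (by decide))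
        rcases Finset.subset_singleton_iff.mp hsub with h | h
        · exact absurd h (Finset.nonempty_iff_ne_empty.mp hne0)
        · rw [h, pnw_nl_single _ 0] at hminS0
          simp only [hload0] at hminS0; norm_num at hminS0
    have hl1 : ∀ v : Fin 4, load 4 D 1 v =
        if v ∈ ({1,2,3} : Finset (Fin 4)) then 1/3 else 0 := by
      intro v
      rw [hupd0 v, hS0, hnl0, pnw_card123]
      split_ifs
      · rfl
      · exact hload0 4 D v
    have hl10 : load 4 D 1 0 = 0 := by rw [hl1 0, if_neg (by decide)]
    have hl11 : load 4 D 1 1 = 1/3 := by rw [hl1 1, if_pos (by decide)]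
    have hl12 : load 4 D 1 2 = 1/3 := by rw [hl1 2, if_pos (by decide)]
    have hl13 : load 4 D 1 3 = 1/3 := by rw [hl1 3, if_pos (by decide)]
    -- round 1
    obtain ⟨hne1, happr1, hmin1, -, hupd1⟩ := hstep 4 D 1
    have hw1 : R'.choice 4 D 1 = 0 ∨ R'.choice 4 D 1 = 1 := by
      have h := R'.choice_mem 4 D 1
      rw [hC1, show pnwC 1 = {0,1} from rfl] at h
      simpa using h
    have hminS1 : newLoad (load 4 D 1) (S 4 D 1) ≤ 2/3 := by
      have h := hmin1 {0,3} (by decide)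
        ⟨0, fun v hv => by rw [hA1]; fin_cases hv <;> decide⟩
      rw [pnw_nl_pair _ 0 3 (by decide), hl10, hl13] at h
      linarith
    have hS1 : S 4 D 1 = {0,3} := by
      rcases hw1 with hw1 | hw1
      · have hsub : S 4 D 1 ⊆ {0,3} := by
          intro v hv
          have h := happr1 v hv
          rw [hw1, hA1] at h
          fin_cases v <;> first | decide | (exact absurd h (by decide))
        rcases pnw_enum03 _ hsub hne1 with h|h|h
        · rw [h, pnw_nl_single _ 0, hl10] at hminS1; norm_num at hminS1
        · rw [h, pnw_nl_single _ 3, hl13] at hminS1; norm_num at hminS1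
        · exact h
      · have hsub : S 4 D 1 ⊆ {1,2} := by
          intro v hv
          have h := happr1 v hv
          rw [hw1, hA1] at h
          fin_cases v <;> first | decide | (exact absurd h (by decide))
        exfalso
        rcases pnw_enum12 _ hsub hne1 with h|h|h
        · rw [h, pnw_nl_single _ 1, hl11] at hminS1; norm_num at hminS1
        · rw [h, pnw_nl_single _ 2, hl12] at hminS1; norm_num at hminS1
        · rw [h, pnw_nl_pair _ 1 2 (by decide), hl11, hl12] at hminS1; norm_num at hminS1
    have hnlS1 : newLoad (load 4 D 1) {0,3} = 2/3 := by
      rw [pnw_nl_pair _ 0 3 (by decide), hl10, hl13]; norm_num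
    have hl2 : ∀ v : Fin 4, load 4 D 2 v =
        if v ∈ ({0,3} : Finset (Fin 4)) then 2/3 else load 4 D 1 v := by
      intro v
      rw [hupd1 v, hS1, hnlS1]
    refine ⟨?_, ?_, ?_, ?_⟩
    · rw [hl2 0, if_pos (by decide)]
    · rw [hl2 1, if_neg (by decide)]; exact hl11
    · rw [hl2 2, if_neg (by decide)]; exact hl12
    · rw [hl2 3, if_pos (by decide)]
  -- Step 2: the loads before round 2 in both sequences.
  obtain ⟨hP0, hP1, hP2, hP3⟩ := key pnwDP rfl rfl rfl rfl
  obtain ⟨hQ0, hQ1, hQ2, hQ3⟩ := key pnwDQ rfl rfl rfl rfl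
  -- Step 3: Phragmén's choice in round 2 of `pnwDP` is `0`.
  have hwP : R'.choice 4 pnwDP 2 = 0 := by
    obtain ⟨hne2, happr2, hmin2, -, -⟩ := hstep 4 pnwDP 2
    have hw : R'.choice 4 pnwDP 2 = 0 ∨ R'.choice 4 pnwDP 2 = 1 ∨ R'.choice 4 pnwDP 2 = 2 := by
      have h := R'.choice_mem 4 pnwDP 2
      rw [show pnwDP.C 2 = {0,1,2} from rfl] at h
      simpa using h
    have hminS2 : newLoad (load 4 pnwDP 2) (S 4 pnwDP 2) ≤ 7/6 := by
      have h := hmin2 {0,3} (by decide) ⟨0, fun v hv => by fin_cases hv <;> decide⟩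
      rw [pnw_nl_pair _ 0 3 (by decide), hP0, hP3] at h
      linarith
    rcases hw with hw | hw | hw
    · exact hw
    · exfalso
      have hsub : S 4 pnwDP 2 ⊆ {1} := by
        intro v hv
        have h := happr2 v hv
        rw [hw, show pnwDP.A 2 = pnwAP 2 from rfl] at h
        fin_cases v <;> first | decide | (exact absurd h (by decide))
      rcases Finset.subset_singleton_iff.mp hsub with h | h
      · exact absurd h (Finset.nonempty_iff_ne_empty.mp hne2)
      · rw [h, pnw_nl_single _ 1, hP1] at hminS2; norm_num at hminS2
    · exfalso
      have hsub : S 4 pnwDP 2 ⊆ {2} := by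
        intro v hv
        have h := happr2 v hv
        rw [hw, show pnwDP.A 2 = pnwAP 2 from rfl] at h
        fin_cases v <;> first | decide | (exact absurd h (by decide))
      rcases Finset.subset_singleton_iff.mp hsub with h | h
      · exact absurd h (Finset.nonempty_iff_ne_empty.mp hne2)
      · rw [h, pnw_nl_single _ 2, hP2] at hminS2; norm_num at hminS2
  -- Step 4: Phragmén's choice in round 2 of `pnwDQ` is `1`.
  have hwQ : R'.choice 4 pnwDQ 2 = 1 := by
    obtain ⟨hne2, happr2, hmin2, -, -⟩ := hstep 4 pnwDQ 2
    have hw : R'.choice 4 pnwDQ 2 = 0 ∨ R'.choice 4 pnwDQ 2 = 1 ∨ R'.choice 4 pnwDQ 2 = 2 := by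
      have h := R'.choice_mem 4 pnwDQ 2
      rw [show pnwDQ.C 2 = {0,1,2} from rfl] at h
      simpa using h
    have hminS2 : newLoad (load 4 pnwDQ 2) (S 4 pnwDQ 2) ≤ 5/6 := by
      have h := hmin2 {1,2} (by decide) ⟨1, fun v hv => by fin_cases hv <;> decide⟩
      rw [pnw_nl_pair _ 1 2 (by decide), hQ1, hQ2] at h
      linarith
    rcases hw with hw | hw | hw
    · exfalso
      have hsub : S 4 pnwDQ 2 ⊆ {0,2,3} := by
        intro v hv
        have h := happr2 v hv
        rw [hw, show pnwDQ.A 2 = pnwAQ 2 from rfl] at h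
        fin_cases v <;> first | decide | (exact absurd h (by decide))
      rcases pnw_enum023 _ hsub hne2 with h|h|h|h|h|h|h
      · rw [h, pnw_nl_single _ 0, hQ0] at hminS2; norm_num at hminS2
      · rw [h, pnw_nl_single _ 2, hQ2] at hminS2; norm_num at hminS2
      · rw [h, pnw_nl_single _ 3, hQ3] at hminS2; norm_num at hminS2
      · rw [h, pnw_nl_pair _ 0 2 (by decide), hQ0, hQ2] at hminS2; norm_num at hminS2
      · rw [h, pnw_nl_pair _ 0 3 (by decide), hQ0, hQ3] at hminS2; norm_num at hminS2
      · rw [h, pnw_nl_pair _ 2 3 (by decide), hQ2, hQ3] at hminS2; norm_num at hminS2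
      · rw [h, pnw_nl_triple _ 0 2 3 (by decide) (by decide) (by decide), hQ0, hQ2, hQ3]
          at hminS2
        norm_num at hminS2
    · exact hw
    · exfalso
      obtain ⟨v, hv⟩ := hne2
      have h := happr2 v hv
      rw [hw, show pnwDQ.A 2 = pnwAQ 2 from rfl] at h
      fin_cases v <;> exact absurd h (by decide)
  -- Step 5: the WAM weights in round 2 agree on the two sequences.
  set β : Fin 4 → ℝ := α 4 pnwDP 2 with hβ
  have hβQ : α 4 pnwDQ 2 = β := by
    refine hαinv 4 pnwDQ pnwDP 2 fun i hi => ?_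
    interval_cases i <;> exact ⟨rfl, rfl⟩
  -- Step 6: the WAM constraints.
  have hselP := hαsel 4 pnwDP 2
  have hselQ := hαsel 4 pnwDQ 2
  rw [hcon 4 pnwDP 2, hwP, ← hβ] at hselP
  rw [hcon 4 pnwDQ 2, hwQ, hβQ] at hselQ
  have h1mem : (1 : ℕ) ∈ pnwDP.C 2 := by decide
  have h0mem : (0 : ℕ) ∈ pnwDQ.C 2 := by decide
  have hle1 : β 1 ≤ β 0 + β 3 := by
    have h := hselP.2.1 1 h1mem
    rwa [show pnwDP.A 2 = pnwAP 2 from rfl, pnw_scoreP1, pnw_scoreP0] at h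
  have hle2 : β 0 + β 3 ≤ β 1 := by
    have h := hselQ.2.1 0 h0mem
    rw [show pnwDQ.A 2 = pnwAQ 2 from rfl, pnw_scoreQ0, pnw_scoreQ1] at h
    linarith
  have heq : β 0 + β 3 = β 1 := le_antisymm hle2 hle1
  have htb01 : tb 0 1 := by
    refine hselP.2.2 1 h1mem ?_
    rw [show pnwDP.A 2 = pnwAP 2 from rfl, pnw_scoreP1, pnw_scoreP0, heq]
  have htb10 : tb 1 0 := by
    refine hselQ.2.2 0 h0mem ?_
    rw [show pnwDQ.A 2 = pnwAQ 2 from rfl, pnw_scoreQ0, pnw_scoreQ1]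
    linarith
  haveI := htb
  have : (0 : ℕ) = 1 := antisymm htb01 htb10
  simp at this
end

section
/- Let R be a win-based WAM that satisfies apportionment lower quota (ALQ). Then R is equivalent to Perpetual PAV: its weight sequence satisfies g^{(j)}(1) = 1/(j+1) for all j ≥ 0, so R selects the same choice sequence as Perpetual PAV on every decision sequence (under the same tie-breaking). -/
open scoped Classical
open Finset

section Aux

variable (R : PerpetualRule) (g : ℝ → ℝ)

lemma satAt_succ {n : ℕ} (D : DecisionSeq n) (v : Fin n) (k : ℕ) :
    satAt R D v (k + 1) =
      satAt R D v k + (if R.choice n D k ∈ D.A k v then 1 else 0) := by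
  unfold satAt
  rw [Finset.range_add_one, Finset.filter_insert]
  split_ifs with h
  · rw [Finset.card_insert_of_notMem (by simp)]
  · rfl

lemma basicWeight_id_eq {n : ℕ} (D : DecisionSeq n) (k : ℕ) (v : Fin n) :
    basicWeight R id g n D k v = g^[satAt R D v k] 1 := by
  induction k with
  | zero => simp [basicWeight, satAt]
  | succ k ih =>
      rw [satAt_succ]
      show (if R.choice n D k ∈ D.A k v then g (basicWeight R id g n D k v)
        else id (basicWeight R id g n D k v)) = _
      split_ifs with h
      · simp [ih, Function.iterate_succ_apply']
      · simp [ih]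

lemma pav_iterate (j : ℕ) : (fun x : ℝ => x / (x + 1))^[j] 1 = 1 / ((j : ℝ) + 1) := by
  induction j with
  | zero => simp
  | succ j ih =>
      rw [Function.iterate_succ_apply', ih]
      have h1 : ((j : ℝ) + 1) ≠ 0 := by positivity
      have h2 : ((j : ℝ) + 1 + 1) ≠ 0 := by positivity
      push_cast
      field_simp
      ring

/-- The simple decision sequence induced by a group assignment `grp`. -/
def simpleD (n : ℕ) (grp : Fin n → ℕ) : DecisionSeq n where
  C := fun _ => Finset.image grp Finset.univ
  A := fun _ v => {grp v}
  approvalSub := by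
    intro i v
    simp [Finset.singleton_subset_iff]
  approvalNonempty := by
    intro i v
    exact Finset.singleton_nonempty _

/-- Number of rounds among the first `t` in which `c` was chosen. -/
noncomputable def seats (n : ℕ) (D : DecisionSeq n) (c t : ℕ) : ℕ :=
  ((Finset.range t).filter fun i => R.choice n D i = c).card

lemma seats_succ (n : ℕ) (D : DecisionSeq n) (c t : ℕ) :
    seats R n D c (t + 1) =
      seats R n D c t + (if R.choice n D t = c then 1 else 0) := by
  unfold seats
  rw [Finset.range_add_one, Finset.filter_insert]
  split_ifs with h
  · rw [Finset.card_insert_of_notMem (by simp)]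
  · rfl

lemma seats_le_self (n : ℕ) (D : DecisionSeq n) (c t : ℕ) :
    seats R n D c t ≤ t := by
  calc seats R n D c t ≤ (Finset.range t).card := Finset.card_filter_le _ _
  _ = t := Finset.card_range t

lemma satAt_simpleD (n : ℕ) (grp : Fin n → ℕ) (v : Fin n) (t : ℕ) :
    satAt R (simpleD n grp) v t = seats R n (simpleD n grp) (grp v) t := by
  unfold satAt seats
  congr 1
  apply Finset.filter_congr
  intro i _
  simp [simpleD]

lemma sum_seats (n : ℕ) (grp : Fin n → ℕ) (t : ℕ) :
    ∑ c ∈ Finset.image grp Finset.univ, seats R n (simpleD n grp) c t = t := by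
  unfold seats
  rw [← Finset.card_eq_sum_card_fiberwise (f := fun i => R.choice n (simpleD n grp) i)
    (t := Finset.image grp Finset.univ)]
  · exact Finset.card_range t
  · intro i _
    exact R.choice_mem n (simpleD n grp) i

lemma score_simpleD (n : ℕ) (grp : Fin n → ℕ) (F : Fin n → ℝ) (G : ℕ → ℝ)
    (hF : ∀ v, F v = G (grp v)) (k c : ℕ) :
    approvalScore F ((simpleD n grp).A k) c =
      ((Finset.univ.filter fun v : Fin n => grp v = c).card : ℝ) * G c := by
  unfold approvalScore
  have hv : ∀ v : Fin n, (if c ∈ (simpleD n grp).A k v then F v else 0)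
      = (if grp v = c then G c else 0) := by
    intro v
    by_cases h : grp v = c
    · simp [simpleD, hF, h]
    · simp [simpleD, h, Ne.symm h]
  rw [Finset.sum_congr rfl (fun v _ => hv v), ← Finset.sum_filter,
    Finset.sum_const, nsmul_eq_mul]

lemma seats_bound (n : ℕ) (D : DecisionSeq n) (c₀ J k : ℕ)
    (h : ∀ t < k, seats R n D c₀ t = J → R.choice n D t ≠ c₀) :
    seats R n D c₀ k ≤ J := by
  induction k with
  | zero => simp [seats]
  | succ k ih =>
      have ih' := ih (fun t ht => h t (Nat.lt_succ_of_lt ht))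
      rw [seats_succ]
      split_ifs with hc
      · have : seats R n D c₀ k ≠ J := fun hJ => h k (Nat.lt_succ_self k) hJ hc
        omega
      · omega

end Aux
section Aux2

lemma card_filter_fin (n : ℕ) (p : ℕ → Prop) [DecidablePred p] :
    (Finset.univ.filter fun v : Fin n => p v.val).card = ((Finset.range n).filter p).card := by
  apply Finset.card_bij (fun (v : Fin n) _ => v.val)
  · intro v hv
    simp only [Finset.mem_filter, Finset.mem_range, Finset.mem_univ, true_and] at *
    exact ⟨v.isLt, hv⟩
  · intro a _ b _ h
    exact Fin.val_injective h
  · intro b hb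
    simp only [Finset.mem_filter, Finset.mem_range] at hb
    exact ⟨⟨b, hb.1⟩, by simp [hb.2], rfl⟩

lemma fiber_card (s₁ s₂ r : ℕ) (h₁ : 0 < s₁) (c : ℕ) (hc : c ≤ r) :
    (Finset.univ.filter fun v : Fin (r * s₁ + s₂) =>
      min (v.val / s₁) r = c).card = if c = r then s₂ else s₁ := by
  rw [card_filter_fin (r * s₁ + s₂) (fun x => min (x / s₁) r = c)]
  split_ifs with hcr
  · subst hcr
    have : ((Finset.range (c * s₁ + s₂)).filter fun x => min (x / s₁) c = c)
        = Finset.Ico (c * s₁) (c * s₁ + s₂) := by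
      ext x
      simp only [Finset.mem_filter, Finset.mem_range, Finset.mem_Ico]
      constructor
      · rintro ⟨hx, hmin⟩
        have : c ≤ x / s₁ := by omega
        rw [Nat.le_div_iff_mul_le h₁] at this
        omega
      · rintro ⟨hlo, hhi⟩
        have : c ≤ x / s₁ := (Nat.le_div_iff_mul_le h₁).2 hlo
        constructor
        · omega
        · omega
    rw [this, Nat.card_Ico]
    omega
  · have hclt : c < r := lt_of_le_of_ne hc hcr
    have key : ∀ x : ℕ, (x < r * s₁ + s₂ ∧ min (x / s₁) r = c) ↔
        (c * s₁ ≤ x ∧ x < (c + 1) * s₁) := by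
      intro x
      constructor
      · rintro ⟨hx, hmin⟩
        have hdiv : x / s₁ = c := by
          rcases le_or_gt r (x / s₁) with h | h
          · omega
          · omega
        have h1 : c ≤ x / s₁ := le_of_eq hdiv.symm
        have h2 : x / s₁ < c + 1 := by omega
        rw [Nat.le_div_iff_mul_le h₁] at h1
        rw [Nat.div_lt_iff_lt_mul h₁] at h2
        exact ⟨h1, h2⟩
      · rintro ⟨hlo, hhi⟩
        have h1 : c ≤ x / s₁ := (Nat.le_div_iff_mul_le h₁).2 hlo
        have h2 : x / s₁ < c + 1 := (Nat.div_lt_iff_lt_mul h₁).2 hhi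
        have hdiv : x / s₁ = c := by omega
        have hxlt : x < r * s₁ + s₂ := by
          have : (c + 1) * s₁ ≤ r * s₁ := Nat.mul_le_mul_right _ (by omega)
          omega
        exact ⟨hxlt, by omega⟩
    have : ((Finset.range (r * s₁ + s₂)).filter fun x => min (x / s₁) r = c)
        = Finset.Ico (c * s₁) ((c + 1) * s₁) := by
      ext x
      simp only [Finset.mem_filter, Finset.mem_range, Finset.mem_Ico]
      exact key x
    rw [this, Nat.card_Ico]
    ring_nf
    omega

lemma image_grp (s₁ s₂ r : ℕ) (h₁ : 0 < s₁) (h₂ : 0 < s₂) :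
    Finset.image (fun v : Fin (r * s₁ + s₂) => min (v.val / s₁) r) Finset.univ
      = Finset.range (r + 1) := by
  ext c
  simp only [Finset.mem_image, Finset.mem_univ, true_and, Finset.mem_range]
  constructor
  · rintro ⟨v, rfl⟩
    omega
  · intro hc
    have hc' : c ≤ r := by omega
    have hcard := fiber_card s₁ s₂ r h₁ c hc'
    have hpos : 0 < (Finset.univ.filter fun v : Fin (r * s₁ + s₂) =>
        min (v.val / s₁) r = c).card := by
      rw [hcard]; split_ifs <;> omega
    obtain ⟨v, hv⟩ := Finset.card_pos.mp hpos
    rw [Finset.mem_filter] at hv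
    exact ⟨v, hv.2⟩

end Aux2
section Core

lemma core_contra (R : PerpetualRule) (g : ℝ → ℝ) (tb : ℕ → ℕ → Prop)
    (hsel : IsBasicWAMWith R id g tb) (hALQ : SatisfiesALQ R)
    (s₁ s₂ r J SB k : ℕ) (n : ℕ) (grp : Fin n → ℕ)
    (hn : n = r * s₁ + s₂)
    (himg : Finset.image grp Finset.univ = Finset.range (r + 1))
    (hfib : ∀ c < r, (Finset.univ.filter fun v => grp v = c).card = s₁)
    (hfibr : (Finset.univ.filter fun v => grp v = r).card = s₂)
    (hs₂ : 0 < s₂) (hr : 0 < r)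
    (hk : k - J ≤ r * (SB + 1))
    (hscore : ∀ s ≤ SB, (s₂ : ℝ) * g^[J] 1 < (s₁ : ℝ) * g^[s] 1)
    (hquota : (J + 1) * n ≤ k * s₂) : False := by
  have hnpos : 0 < n := by omega
  -- score formula
  have hsc : ∀ t c, approvalScore (basicWeight R id g n (simpleD n grp) t)
      ((simpleD n grp).A t) c
      = ((Finset.univ.filter fun v => grp v = c).card : ℝ)
          * g^[seats R n (simpleD n grp) c t] 1 := by
    intro t c
    exact score_simpleD n grp _ (fun c' => g^[seats R n (simpleD n grp) c' t] 1)
      (fun v => by rw [basicWeight_id_eq R g, satAt_simpleD R]) t c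
  -- blocking
  have hblock : ∀ t < k, seats R n (simpleD n grp) r t = J →
      R.choice n (simpleD n grp) t ≠ r := by
    intro t ht hJ hcr
    obtain ⟨hmem, hmax, -⟩ := hsel n (simpleD n grp) t
    have hsum : ∑ c ∈ Finset.range (r + 1), seats R n (simpleD n grp) c t = t := by
      have := sum_seats R n grp t
      rwa [himg] at this
    rw [Finset.sum_range_succ, hJ] at hsum
    have hJt : J ≤ t := hJ ▸ seats_le_self R n (simpleD n grp) r t
    have hex : ∃ c ∈ Finset.range r, seats R n (simpleD n grp) c t ≤ SB := by
      by_contra hall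
      push_neg at hall
      have h2 : r * (SB + 1) ≤ ∑ c ∈ Finset.range r, seats R n (simpleD n grp) c t := by
        calc r * (SB + 1) = ∑ _c ∈ Finset.range r, (SB + 1) := by
              rw [Finset.sum_const, Finset.card_range, smul_eq_mul]
        _ ≤ _ := Finset.sum_le_sum fun c hc => hall c hc
      omega
    obtain ⟨c, hcr', hcSB⟩ := hex
    rw [Finset.mem_range] at hcr'
    have h1 := hmax c (by
      show c ∈ (simpleD n grp).C t
      show c ∈ Finset.image grp Finset.univ
      rw [himg]
      exact Finset.mem_range.2 (by omega))
    rw [hcr, hsc t c, hsc t r, hJ, hfib c hcr', hfibr] at h1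
    exact absurd h1 (not_le.2 (hscore _ hcSB))
  have hseats := seats_bound R n (simpleD n grp) r J k hblock
  -- the victim voter
  obtain ⟨v, hv⟩ := Finset.card_pos.mp (hfibr ▸ hs₂)
  rw [Finset.mem_filter] at hv
  have hgv : grp v = r := hv.2
  have hsimple : (simpleD n grp).IsSimple :=
    ⟨fun i => rfl, fun i => rfl, fun u => Finset.card_singleton _⟩
  have halq := hALQ n (simpleD n grp) hsimple k v
  have hgs : groupSize (simpleD n grp) v = s₂ := by
    have heq : (Finset.univ.filter fun u : Fin n =>
        (simpleD n grp).A 0 u = (simpleD n grp).A 0 v)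
        = Finset.univ.filter fun u : Fin n => grp u = r := by
      apply Finset.filter_congr
      intro u _
      show ({grp u} : Finset ℕ) = {grp v} ↔ grp u = r
      rw [hgv, Finset.singleton_inj]
    rw [groupSize, heq, hfibr]
  have hsat : satAt R (simpleD n grp) v k ≤ J := by
    rw [satAt_simpleD, hgv]; exact hseats
  have hfl : (J + 1 : ℤ) ≤
      ⌊((k : ℚ) * (groupSize (simpleD n grp) v : ℚ)) / (n : ℚ)⌋ := by
    rw [Int.le_floor, hgs, le_div_iff₀ (by positivity)]
    push_cast
    exact_mod_cast hquota
  have h2 := le_trans hfl halq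
  have h3 : ((satAt R (simpleD n grp) v k : ℕ) : ℤ) ≤ (J : ℤ) := by exact_mod_cast hsat
  omega

end Core
section Cases

lemma caseA (R : PerpetualRule) (g : ℝ → ℝ) (tb : ℕ → ℕ → Prop)
    (hsel : IsBasicWAMWith R id g tb) (hALQ : SatisfiesALQ R) (m : ℕ)
    (IH : ∀ i < m + 1, g^[i] 1 = 1 / ((i : ℝ) + 1))
    (hlt : g^[m + 1] 1 < 1 / ((m : ℝ) + 2)) : False := by
  set w := g^[m + 1] 1 with hw
  have hub : max (w * ((m : ℝ) + 1)) 0 < ((m : ℝ) + 1) / ((m : ℝ) + 2) := by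
    apply max_lt
    · have h := mul_lt_mul_of_pos_right hlt (show (0:ℝ) < (m:ℝ)+1 by positivity)
      calc w * ((m : ℝ) + 1) < (1 / ((m : ℝ) + 2)) * ((m : ℝ) + 1) := h
      _ = ((m : ℝ) + 1) / ((m : ℝ) + 2) := by ring
    · positivity
  obtain ⟨ρ, hρ1, hρ2⟩ := exists_rat_btwn hub
  have hρpos : (0 : ℝ) < ρ := lt_of_le_of_lt (le_max_right _ _) hρ1
  have hρpos' : 0 < ρ := by exact_mod_cast hρpos
  set a := ρ.den with ha
  set b := ρ.num.toNat with hb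
  have hapos : 0 < a := ρ.den_pos
  have hb' : (b : ℤ) = ρ.num := Int.toNat_of_nonneg (Rat.num_pos.2 hρpos').le
  have hbpos : 0 < b := by
    have := Rat.num_pos.2 hρpos'; omega
  have hnum : ((ρ.num : ℝ)) = (b : ℝ) := by exact_mod_cast hb'.symm
  have hcast : (ρ : ℝ) = (b : ℝ) / (a : ℝ) := by rw [Rat.cast_def, hnum]
  have haR : (0 : ℝ) < a := by exact_mod_cast hapos
  have hbR : (0 : ℝ) < b := by exact_mod_cast hbpos
  -- b*(m+2) < a*(m+1) in ℕ
  have hR2 : (b : ℝ) * ((m : ℝ) + 2) < (a : ℝ) * ((m : ℝ) + 1) := by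
    rw [hcast] at hρ2
    rw [div_lt_div_iff₀ haR (by positivity)] at hρ2
    linarith
  have h1 : b * (m + 2) < a * (m + 1) := by exact_mod_cast hR2
  -- a*w*(m+1) < b
  have hwb : (a : ℝ) * w * ((m : ℝ) + 1) < b := by
    have := lt_of_le_of_lt (le_max_left (w * ((m : ℝ) + 1)) 0) hρ1
    rw [hcast, lt_div_iff₀ haR] at this
    linarith
  apply core_contra R g tb hsel hALQ b a a (m + 1) m ((a + 1) * (m + 1)) (a * b + a)
    (fun v : Fin (a * b + a) => min (v.val / b) a) rfl
    (image_grp b a a hbpos hapos)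
    (fun c hc => by
      have := fiber_card b a a hbpos c hc.le
      rwa [if_neg (ne_of_lt hc)] at this)
    (by have := fiber_card b a a hbpos a le_rfl; rwa [if_pos rfl] at this)
    hapos hapos
  · have e : (a + 1) * (m + 1) = a * (m + 1) + (m + 1) := by ring
    omega
  · intro s hs
    rw [IH s (by omega)]
    rw [show (m : ℕ) + 1 = m + 1 from rfl]
    have hs1 : (0 : ℝ) < (s : ℝ) + 1 := by positivity
    have hsm : (s : ℝ) + 1 ≤ (m : ℝ) + 1 := by
      have : s ≤ m := hs
      have : (s : ℝ) ≤ (m : ℝ) := by exact_mod_cast this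
      linarith
    rw [mul_one_div, lt_div_iff₀ hs1]
    rcases le_or_gt w 0 with hw0 | hw0
    · have h2 : (a : ℝ) * w * ((s : ℝ) + 1) ≤ 0 := by
        apply mul_nonpos_of_nonpos_of_nonneg
        · exact mul_nonpos_of_nonneg_of_nonpos haR.le hw0
        · linarith
      linarith
    · have h2 : (a : ℝ) * w * ((s : ℝ) + 1) ≤ (a : ℝ) * w * ((m : ℝ) + 1) := by
        apply mul_le_mul_of_nonneg_left hsm
        exact mul_nonneg haR.le hw0.le
      linarith
  · have e1 : ((m + 1) + 1) * (a * b + a) = a * ((m + 2) * b + (m + 2)) := by ring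
    have e2 : (a + 1) * (m + 1) * a = a * (a * (m + 1) + (m + 1)) := by ring
    rw [e1, e2]
    refine Nat.mul_le_mul_left a ?_
    have hcomm : (m + 2) * b = b * (m + 2) := Nat.mul_comm _ _
    omega

lemma caseB (R : PerpetualRule) (g : ℝ → ℝ) (tb : ℕ → ℕ → Prop)
    (hsel : IsBasicWAMWith R id g tb) (hALQ : SatisfiesALQ R) (m : ℕ)
    (IH : ∀ i < m + 1, g^[i] 1 = 1 / ((i : ℝ) + 1))
    (hgt : 1 / ((m : ℝ) + 2) < g^[m + 1] 1) : False := by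
  set w := g^[m + 1] 1 with hw
  have hlb : 1 / ((m : ℝ) + 2) < min w (1 / ((m : ℝ) + 1)) := by
    apply lt_min hgt
    apply one_div_lt_one_div_of_lt
    · positivity
    · linarith
  obtain ⟨ρ, hρ1, hρ2⟩ := exists_rat_btwn hlb
  have hρpos : (0 : ℝ) < ρ := lt_trans (by positivity) hρ1
  have hρpos' : 0 < ρ := by exact_mod_cast hρpos
  set a := ρ.den with ha
  set b := ρ.num.toNat with hb
  have hapos : 0 < a := ρ.den_pos
  have hb' : (b : ℤ) = ρ.num := Int.toNat_of_nonneg (Rat.num_pos.2 hρpos').le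
  have hbpos : 0 < b := by
    have := Rat.num_pos.2 hρpos'; omega
  have hnum : ((ρ.num : ℝ)) = (b : ℝ) := by exact_mod_cast hb'.symm
  have hcast : (ρ : ℝ) = (b : ℝ) / (a : ℝ) := by rw [Rat.cast_def, hnum]
  have haR : (0 : ℝ) < a := by exact_mod_cast hapos
  have hbR : (0 : ℝ) < b := by exact_mod_cast hbpos
  -- a + 1 ≤ (m+2) * b
  have hR1 : (a : ℝ) < (b : ℝ) * ((m : ℝ) + 2) := by
    rw [hcast] at hρ1
    rw [div_lt_div_iff₀ (by positivity) haR] at hρ1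
    linarith
  have hab1 : a < b * (m + 2) := by exact_mod_cast hR1
  -- b < a * w
  have habw : (b : ℝ) < (a : ℝ) * w := by
    have h2 := lt_of_lt_of_le hρ2 (min_le_left _ _)
    rw [hcast, div_lt_iff₀ haR] at h2
    linarith
  -- b*(m+1) < a
  have hab2 : b * (m + 1) < a := by
    have h2 := lt_of_lt_of_le hρ2 (min_le_right _ _)
    rw [hcast, div_lt_div_iff₀ haR (by positivity)] at h2
    have : (b : ℝ) * ((m : ℝ) + 1) < a := by linarith
    exact_mod_cast this
  apply core_contra R g tb hsel hALQ a b b 0 (m + 1) (b * (m + 2)) (b * a + b)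
    (fun v : Fin (b * a + b) => min (v.val / a) b) rfl
    (image_grp a b b hapos hbpos)
    (fun c hc => by
      have := fiber_card a b b hapos c hc.le
      rwa [if_neg (ne_of_lt hc)] at this)
    (by have := fiber_card a b b hapos b le_rfl; rwa [if_pos rfl] at this)
    hbpos hbpos
  · have e : b * (m + 1 + 1) = b * (m + 2) := by ring
    omega
  · intro s hs
    simp only [Function.iterate_zero, id_eq, mul_one]
    rcases Nat.lt_or_ge s (m + 1) with hsm | hsm
    · rw [IH s hsm, mul_one_div, lt_div_iff₀ (by positivity)]
      have : b * (s + 1) < a := by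
        calc b * (s + 1) ≤ b * (m + 1) := Nat.mul_le_mul_left b (by omega)
        _ < a := hab2
      exact_mod_cast this
    · have hsm' : s = m + 1 := le_antisymm hs hsm
      rw [hsm']
      exact habw
  · have e1 : (0 + 1) * (b * a + b) = b * (a + 1) := by ring
    have e2 : b * (m + 2) * b = b * (b * (m + 2)) := by ring
    rw [e1, e2]
    exact Nat.mul_le_mul_left b (by omega)

end Cases

/-- A win-based WAM satisfying apportionment lower quota is
equivalent to Perpetual PAV: its weight sequence satisfies `g^[j] 1 = 1/(j+1)`
for all `j`, and hence (under the same tie-breaking) the rule selects the same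
choice sequence as Perpetual PAV, i.e. it is a Perpetual PAV rule. -/
theorem winBased_WAM_with_ALQ_is_perpetualPAV
    (R : PerpetualRule) (g : ℝ → ℝ) (tb : ℕ → ℕ → Prop) (htb : IsLinearOrder ℕ tb)
    (hR : IsWinBasedWAM R g tb) (hALQ : SatisfiesALQ R) :
    (∀ j : ℕ, g^[j] (1 : ℝ) = 1 / ((j : ℝ) + 1)) ∧ IsPerpetualPAV R tb := by
  obtain ⟨hg, hsel⟩ := hR
  have key : ∀ j : ℕ, g^[j] (1 : ℝ) = 1 / ((j : ℝ) + 1) := by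
    intro j
    induction j using Nat.strong_induction_on with
    | _ j IH =>
      match j, IH with
      | 0, _ => simp
      | (m + 1), IH =>
        by_contra hne
        have hcast : ((m + 1 : ℕ) : ℝ) + 1 = (m : ℝ) + 2 := by push_cast; ring
        rcases lt_or_gt_of_ne hne with h | h
        · exact caseA R g tb hsel hALQ m (fun i hi => IH i hi) (by rwa [hcast] at h)
        · exact caseB R g tb hsel hALQ m (fun i hi => IH i hi) (by rwa [hcast] at h)
  refine ⟨key, ?_⟩
  intro n D k
  have hw : basicWeight R id (fun x : ℝ => x / (x + 1)) n D k = basicWeight R id g n D k := by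
    funext v
    rw [basicWeight_id_eq R (fun x : ℝ => x / (x + 1)), basicWeight_id_eq R g,
      pav_iterate, key]
  rw [hw]
  exact hsel n D k
end

section
/- Perpetual Consensus, restricted to simple decision sequences, coincides with Frege's apportionment method: for a simple k-decision sequence with alternatives C = {c_1,…,c_m}, N(c_i) = {v ∈ N : A(v) = {c_i}} and p_i = |N(c_i)|/n, it holds for every round t and every voter v with A(v) = {c_i} that |N(c_i)|·α_t(v) = n·s_t^i, where α_t are the Perpetual Consensus weights and s_t^i the weights of Frege's apportionment method on (p_1,…,p_m); consequently, under the same tie-breaking, Perpetual Consensus selects in every round the same alternative as Frege's apportionment method. -/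
open scoped Classical
open Finset

/-! ### Auxiliary material for Statement 17 -/

/-- `fNc n D c`: the number of voters whose approval set (in round 0) is `{c}`. -/
noncomputable def fNc (n : ℕ) (D : DecisionSeq n) (c : ℕ) : ℕ :=
  (Finset.univ.filter fun u : Fin n => D.A 0 u = {c}).card

/-- The invariant relating Perpetual Consensus weights and Frege weights. -/
def FInv (R : PerpetualRule) (n : ℕ) (D : DecisionSeq n) (t : ℕ) : Prop :=
  (∀ (v : Fin n) (c : ℕ), D.A 0 v = {c} →
     (fNc n D c : ℝ) * consensusWeight R n D t v = (n : ℝ) * fregeWeight R n D t c) ∧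
  (∑ c ∈ (D.C 0).filter (fun c => 0 < fNc n D c), fregeWeight R n D t c = 1) ∧
  (∀ c, fNc n D c = 0 → fregeWeight R n D t c ≤ 0)

theorem frege_single {n : ℕ} (D : DecisionSeq n) (hD : D.IsSimple) :
    ∀ (v : Fin n) (c : ℕ), c ∈ D.A 0 v ↔ D.A 0 v = {c} := by
  intro v c
  constructor
  · intro hc
    obtain ⟨a, ha⟩ := Finset.card_eq_one.mp (hD.2.2 v)
    rw [ha] at hc ⊢
    simp only [Finset.mem_singleton] at hc
    rw [hc]
  · intro hc; rw [hc]; exact Finset.mem_singleton_self c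

theorem frege_sum_card {n : ℕ} (D : DecisionSeq n) (hD : D.IsSimple) :
    ∑ c ∈ (D.C 0).filter (fun c => 0 < fNc n D c), fNc n D c = n := by
  have hgv : ∀ v : Fin n, D.A 0 v = {(D.A 0 v).min' (D.approvalNonempty 0 v)} := by
    intro v
    obtain ⟨a, ha⟩ := Finset.card_eq_one.mp (hD.2.2 v)
    simp only [ha, Finset.min'_singleton]
  have key := Finset.card_eq_sum_card_fiberwise
    (f := fun v : Fin n => (D.A 0 v).min' (D.approvalNonempty 0 v))
    (s := (Finset.univ : Finset (Fin n)))
    (t := (D.C 0).filter (fun c => 0 < fNc n D c)) ?_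
  · rw [Finset.card_univ, Fintype.card_fin] at key
    refine Eq.trans (Finset.sum_congr rfl fun c _ => ?_) key.symm
    unfold fNc
    congr 1
    apply Finset.filter_congr
    intro v _
    constructor
    · intro hm
      exact Finset.singleton_inj.mp ((hgv v).symm.trans hm)
    · intro hm
      rw [← hm]
      exact hgv v
  · intro v _
    have hmem : (D.A 0 v).min' (D.approvalNonempty 0 v) ∈ D.A 0 v :=
      Finset.min'_mem _ _
    rw [Finset.mem_coe, Finset.mem_filter]
    refine ⟨D.approvalSub 0 v hmem, ?_⟩
    unfold fNc
    rw [Finset.card_pos]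
    exact ⟨v, by simp [← hgv v]⟩

theorem frege_sum_cardR {n : ℕ} (D : DecisionSeq n) (hD : D.IsSimple) :
    ∑ c ∈ (D.C 0).filter (fun c => 0 < fNc n D c),
      ((Finset.univ.filter fun v : Fin n => D.A 0 v = {c}).card : ℝ) = (n : ℝ) := by
  have := frege_sum_card D hD
  exact_mod_cast congrArg (Nat.cast (R := ℝ)) this

theorem frege_inv_zero (R : PerpetualRule) (n : ℕ) (hn : 0 < n)
    (D : DecisionSeq n) (hD : D.IsSimple) : FInv R n D 0 := by
  have hnR : (0 : ℝ) < n := by exact_mod_cast hn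
  refine ⟨?_, ?_, ?_⟩
  · intro v c _
    simp only [consensusWeight, fregeWeight, fNc, mul_one]
    field_simp
  · simp only [fregeWeight]
    rw [← Finset.sum_div, frege_sum_cardR D hD]
    field_simp
  · intro c h0
    simp only [fregeWeight]
    unfold fNc at h0
    rw [h0]
    simp

theorem frege_key (R : PerpetualRule) (tb : ℕ → ℕ → Prop)
    (hR : IsPerpetualConsensus R tb)
    (n : ℕ) (hn : 0 < n) (D : DecisionSeq n) (hD : D.IsSimple)
    (t : ℕ) (h : FInv R n D t) :
    (∀ c ∈ D.C 0, fregeWeight R n D t c ≤ fregeWeight R n D t (R.choice n D t)) ∧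
    (∀ c ∈ D.C 0, fregeWeight R n D t c = fregeWeight R n D t (R.choice n D t) →
      tb (R.choice n D t) c) ∧
    FInv R n D (t + 1) := by
  obtain ⟨hA, hC, hcard⟩ := hD
  have hsingle := frege_single D ⟨hA, hC, hcard⟩
  have hnR : (0 : ℝ) < n := by exact_mod_cast hn
  have hnne : (n : ℝ) ≠ 0 := ne_of_gt hnR
  have hvmem : ∀ (v : Fin n) (c : ℕ), D.A 0 v = {c} → 0 < fNc n D c := by
    intro v c hc
    unfold fNc
    rw [Finset.card_pos]
    exact ⟨v, by simp [hc]⟩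
  have hcwval : ∀ (v : Fin n) (c : ℕ), D.A 0 v = {c} →
      consensusWeight R n D t v = (n : ℝ) * fregeWeight R n D t c / (fNc n D c : ℝ) := by
    intro v c hc
    have hpos := hvmem v c hc
    have hne : ((fNc n D c : ℕ) : ℝ) ≠ 0 := by
      simp only [ne_eq, Nat.cast_eq_zero]
      omega
    rw [eq_div_iff hne, mul_comm]
    exact h.1 v c hc
  have hscore0 : ∀ c, fNc n D c = 0 →
      approvalScore (fun v => max 0 (consensusWeight R n D t v)) (D.A 0) c = 0 := by
    intro c hc
    apply Finset.sum_eq_zero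
    intro v _
    rw [if_neg]
    intro hmem
    rw [hsingle v c] at hmem
    have := hvmem v c hmem
    omega
  have hscore : ∀ c, 0 < fNc n D c →
      approvalScore (fun v => max 0 (consensusWeight R n D t v)) (D.A 0) c
        = max 0 ((n : ℝ) * fregeWeight R n D t c) := by
    intro c hc
    have hNne : ((fNc n D c : ℕ) : ℝ) ≠ 0 := by
      simp only [ne_eq, Nat.cast_eq_zero]
      omega
    unfold approvalScore
    rw [← Finset.sum_filter]
    have hfe : Finset.univ.filter (fun v : Fin n => c ∈ D.A 0 v)
        = Finset.univ.filter (fun u : Fin n => D.A 0 u = {c}) := by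
      apply Finset.filter_congr
      intro v _
      simp only [hsingle v c]
    rw [hfe]
    rw [Finset.sum_congr rfl (fun v hv => by
      rw [hcwval v c (by simpa using hv)])]
    rw [Finset.sum_const]
    have hcardeq : (Finset.univ.filter fun u : Fin n => D.A 0 u = {c}).card
        = fNc n D c := rfl
    rw [hcardeq, nsmul_eq_mul]
    rcases le_or_gt ((n : ℝ) * fregeWeight R n D t c) 0 with hle | hlt
    · rw [max_eq_left hle, max_eq_left, mul_zero]
      exact div_nonpos_of_nonpos_of_nonneg hle (by positivity)
    · rw [max_eq_right (le_of_lt hlt), max_eq_right, mul_div_cancel₀ _ hNne]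
      positivity
  -- the selection at round t
  have hsel := hR n D t
  rw [hA t, hC t] at hsel
  obtain ⟨hwC, hmax, htie⟩ := hsel
  -- existence of an alternative with positive Frege weight
  have hex : ∃ c ∈ (D.C 0).filter (fun c => 0 < fNc n D c),
      0 < fregeWeight R n D t c := by
    by_contra hcon
    push_neg at hcon
    have hle := Finset.sum_nonpos hcon
    rw [h.2.1] at hle
    linarith
  obtain ⟨c0, hc0mem, hc0pos⟩ := hex
  rw [Finset.mem_filter] at hc0mem
  have hsc0 : approvalScore (fun v => max 0 (consensusWeight R n D t v)) (D.A 0) c0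
      = (n : ℝ) * fregeWeight R n D t c0 := by
    rw [hscore c0 hc0mem.2, max_eq_right (by positivity)]
  have hwpos : 0 < approvalScore (fun v => max 0 (consensusWeight R n D t v)) (D.A 0)
      (R.choice n D t) := by
    have := hmax c0 hc0mem.1
    rw [hsc0] at this
    nlinarith
  have hNw : 0 < fNc n D (R.choice n D t) := by
    by_contra h0
    push_neg at h0
    have h0' : fNc n D (R.choice n D t) = 0 := by omega
    rw [hscore0 _ h0'] at hwpos
    exact lt_irrefl 0 hwpos
  have hNwR : ((fNc n D (R.choice n D t) : ℕ) : ℝ) ≠ 0 := by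
    simp only [ne_eq, Nat.cast_eq_zero]
    omega
  have hfw : 0 < fregeWeight R n D t (R.choice n D t) := by
    rw [hscore _ hNw] at hwpos
    rcases le_or_gt (fregeWeight R n D t (R.choice n D t)) 0 with hle | hlt
    · exfalso
      rw [max_eq_left (by nlinarith)] at hwpos
      exact lt_irrefl 0 hwpos
    · exact hlt
  have hsw : approvalScore (fun v => max 0 (consensusWeight R n D t v)) (D.A 0)
      (R.choice n D t) = (n : ℝ) * fregeWeight R n D t (R.choice n D t) := by
    rw [hscore _ hNw, max_eq_right (by positivity)]
  -- part 2
  have part2 : ∀ c ∈ D.C 0,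
      fregeWeight R n D t c ≤ fregeWeight R n D t (R.choice n D t) := by
    intro c hcC
    rcases Nat.eq_zero_or_pos (fNc n D c) with h0 | hcpos
    · linarith [h.2.2 c h0]
    · have h2 := hmax c hcC
      rw [hscore c hcpos, hsw] at h2
      have h3 : (n : ℝ) * fregeWeight R n D t c
          ≤ (n : ℝ) * fregeWeight R n D t (R.choice n D t) :=
        le_trans (le_max_right _ _) h2
      exact le_of_mul_le_mul_left h3 hnR
  -- part 3
  have part3 : ∀ c ∈ D.C 0,
      fregeWeight R n D t c = fregeWeight R n D t (R.choice n D t) →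
        tb (R.choice n D t) c := by
    intro c hcC heq
    have hcpos : 0 < fNc n D c := by
      by_contra hnp
      push_neg at hnp
      have h0 : fNc n D c = 0 := by omega
      have := h.2.2 c h0
      rw [heq] at this
      linarith
    apply htie c hcC
    rw [hscore c hcpos, hsw, heq, max_eq_right (by positivity)]
  refine ⟨part2, part3, ?_, ?_, ?_⟩
  -- invariant part 1 at t+1
  · intro v c hvc
    have hb := h.1 v c hvc
    have hNcR : ((fNc n D c : ℕ) : ℝ) ≠ 0 := by
      have := hvmem v c hvc
      simp only [ne_eq, Nat.cast_eq_zero]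
      omega
    by_cases hcw : c = R.choice n D t
    · subst hcw
      have hcond : R.choice n D t ∈ D.A t v ∧ 0 < consensusWeight R n D t v := by
        constructor
        · rw [hA t]
          rw [hvc]
          exact Finset.mem_singleton_self _
        · rw [hcwval v _ hvc]
          exact div_pos (mul_pos hnR hfw) (by exact_mod_cast hNw)
      have hFset : (Finset.univ.filter fun u : Fin n =>
          R.choice n D t ∈ D.A t u ∧ 0 < consensusWeight R n D t u)
          = Finset.univ.filter fun u : Fin n => D.A 0 u = {R.choice n D t} := by
        apply Finset.filter_congr
        intro u _
        simp only [hA t]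
        constructor
        · rintro ⟨h1, -⟩
          exact (hsingle u _).mp h1
        · intro h1
          refine ⟨(hsingle u _).mpr h1, ?_⟩
          rw [hcwval u _ h1]
          exact div_pos (mul_pos hnR hfw) (by exact_mod_cast hNw)
      simp only [consensusWeight, fregeWeight]
      rw [if_pos hcond, hFset]
      simp only [reduceIte]
      have hcardeq : (Finset.univ.filter fun u : Fin n =>
          D.A 0 u = {R.choice n D t}).card = fNc n D (R.choice n D t) := rfl
      rw [hcardeq]
      field_simp
      ring_nf
      ring_nf at hb
      nlinarith [hb]
    · have hcond : ¬(R.choice n D t ∈ D.A t v ∧ 0 < consensusWeight R n D t v) := by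
        rintro ⟨h1, -⟩
        rw [hA t, hsingle v _] at h1
        rw [hvc] at h1
        exact hcw (Finset.singleton_inj.mp h1)
      simp only [consensusWeight, fregeWeight]
      rw [if_neg hcond, if_neg (fun he : R.choice n D t = c => hcw he.symm)]
      have hcardeq : (Finset.univ.filter fun u : Fin n =>
          D.A 0 u = {c}).card = fNc n D c := rfl
      rw [hcardeq]
      field_simp
      nlinarith [hb]
  -- invariant part 2 at t+1
  · have hwS : R.choice n D t ∈ (D.C 0).filter (fun c => 0 < fNc n D c) := by
      rw [Finset.mem_filter]
      exact ⟨by rw [← hC t]; exact R.choice_mem n D t, hNw⟩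
    simp only [fregeWeight]
    rw [Finset.sum_sub_distrib, Finset.sum_add_distrib, ← Finset.sum_div,
      frege_sum_cardR D ⟨hA, hC, hcard⟩, h.2.1, Finset.sum_ite_eq, if_pos hwS]
    field_simp
    norm_num
  -- invariant part 3 at t+1
  · intro c h0
    have hfc := h.2.2 c h0
    simp only [fregeWeight]
    unfold fNc at h0
    rw [h0]
    split_ifs <;> simp <;> linarith

/-- On simple decision sequences Perpetual Consensus coincides
with Frege's apportionment method: `|N(c)| · α_t(v) = n · s_t^c` for every voter
`v` with `A(v) = {c}`, and consequently (under the same tie-breaking) in every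
round the chosen alternative is the Frege-weight-maximizing one. -/
theorem perpetualConsensus_coincides_with_frege
    (R : PerpetualRule) (tb : ℕ → ℕ → Prop) (htb : IsLinearOrder ℕ tb)
    (hR : IsPerpetualConsensus R tb)
    (n : ℕ) (hn : 0 < n) (D : DecisionSeq n) (hD : D.IsSimple) :
    (∀ (t : ℕ) (v : Fin n) (c : ℕ), D.A 0 v = {c} →
      ((Finset.univ.filter fun u : Fin n => D.A 0 u = {c}).card : ℝ) *
          consensusWeight R n D t v
        = (n : ℝ) * fregeWeight R n D t c) ∧
    (∀ t : ℕ, ∀ c ∈ D.C 0,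
      fregeWeight R n D t c ≤ fregeWeight R n D t (R.choice n D t)) ∧
    (∀ t : ℕ, ∀ c ∈ D.C 0,
      fregeWeight R n D t c = fregeWeight R n D t (R.choice n D t) →
        tb (R.choice n D t) c) := by
  have hinv : ∀ t, FInv R n D t := by
    intro t
    induction t with
    | zero => exact frege_inv_zero R n hn D hD
    | succ k ih => exact (frege_key R tb hR n hn D hD k ih).2.2
  refine ⟨?_, ?_, ?_⟩
  · intro t v c hc
    exact (hinv t).1 v c hc
  · intro t c hc
    exact (frege_key R tb hR n hn D hD t (hinv t)).1 c hc
  · intro t c hc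
    exact (frege_key R tb hR n hn D hD t (hinv t)).2.1 c hc
end
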